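/- arXiv:2009.05996 — 8 statements merged into one kernel-verified Lean document; each statement's English description precedes it below -/
import Mathlib

section
/- If the edge weight matrices X_{ij} in the block matrix X = [X_{ij}] (with each X_{ij} lower triangular of size s×s) are all lower triangular, then the spectrum of X equals the union over j = 1,…,s of the spectra of the m×m matrices X̃_{jj} defined by (X̃_{jj})_{ik} = (X_{ik})_{jj}. -/
lemma mem_spectrum_iff_det_eq_zero {n : Type*} [Fintype n] [DecidableEq n]
    (A : Matrix n n ℂ) (μ : ℂ) :
    μ ∈ spectrum ℂ A ↔ (μ • (1 : Matrix n n ℂ) - A).det = 0 := by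
  rw [spectrum.mem_iff, Matrix.isUnit_iff_isUnit_det, isUnit_iff_ne_zero, not_ne_iff,
    Algebra.algebraMap_eq_smul_one]

/-- If all blocks `X_{ij}` of the block matrix `X = [X_{ij}]` are lower triangular `s × s`
matrices, then the spectrum of `X` is the union over `j` of the spectra of the `m × m`
matrices `X̃_{jj}` with `(X̃_{jj})_{ik} = (X_{ik})_{jj}`. -/
theorem spectrum_block_lowerTriangular (m s : ℕ)
    (X : Fin m → Fin m → Matrix (Fin s) (Fin s) ℝ)
    (htri : ∀ i j : Fin m, ∀ l k : Fin s, l < k → X i j l k = 0) :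
    spectrum ℂ ((Matrix.of fun (p q : Fin m × Fin s) => X p.1 q.1 p.2 q.2).map
        (fun x : ℝ => (x : ℂ))) =
      ⋃ j : Fin s, spectrum ℂ ((Matrix.of fun (i k : Fin m) => X i k j j).map
        (fun x : ℝ => (x : ℂ))) := by
  set M : Matrix (Fin m × Fin s) (Fin m × Fin s) ℂ :=
    (Matrix.of fun (p q : Fin m × Fin s) => X p.1 q.1 p.2 q.2).map
      (fun x : ℝ => (x : ℂ)) with hM
  set A : Fin s → Matrix (Fin m) (Fin m) ℂ := fun j =>
    (Matrix.of fun (i k : Fin m) => X i k j j).map (fun x : ℝ => (x : ℂ)) with hA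
  ext μ
  simp only [Set.mem_iUnion]
  rw [mem_spectrum_iff_det_eq_zero]
  have hBT : (μ • (1 : Matrix (Fin m × Fin s) (Fin m × Fin s) ℂ) - M).BlockTriangular
      (fun p : Fin m × Fin s => OrderDual.toDual p.2) := by
    intro p q h
    have hlt : p.2 < q.2 := h
    have hne : p ≠ q := fun e => absurd (congrArg Prod.snd e ▸ hlt) (lt_irrefl _)
    simp [hM, Matrix.sub_apply, Matrix.smul_apply, Matrix.one_apply_ne hne,
      htri p.1 q.1 p.2 q.2 hlt]
  have hdet := hBT.det_fintype
  have hblock : ∀ k : Fin s,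
      ((μ • (1 : Matrix (Fin m × Fin s) (Fin m × Fin s) ℂ) - M).toSquareBlock
        (fun p : Fin m × Fin s => OrderDual.toDual p.2) (OrderDual.toDual k)).det
      = (μ • (1 : Matrix (Fin m) (Fin m) ℂ) - A k).det := by
    intro k
    let e : {p : Fin m × Fin s // OrderDual.toDual p.2 = OrderDual.toDual k} ≃ Fin m :=
      { toFun := fun p => p.1.1
        invFun := fun i => ⟨(i, k), rfl⟩
        left_inv := by
          rintro ⟨⟨i, j⟩, hj⟩
          have : j = k := OrderDual.toDual.injective hj
          subst this; rfl
        right_inv := fun i => rfl }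
    have heq : (μ • (1 : Matrix (Fin m × Fin s) (Fin m × Fin s) ℂ) - M).toSquareBlock
        (fun p : Fin m × Fin s => OrderDual.toDual p.2) (OrderDual.toDual k)
        = (μ • (1 : Matrix (Fin m) (Fin m) ℂ) - A k).submatrix e e := by
      ext ⟨⟨i, j⟩, hj⟩ ⟨⟨i', j'⟩, hj'⟩
      have h1 : j = k := OrderDual.toDual.injective hj
      have h2 : j' = k := OrderDual.toDual.injective hj'
      subst h1; subst h2
      simp only [Matrix.toSquareBlock_def, Matrix.submatrix_apply, Matrix.sub_apply,
        Matrix.smul_apply, hM, hA, Matrix.map_apply, Matrix.of_apply]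
      have he1 : e ⟨(i, j'), hj⟩ = i := rfl
      have he2 : e ⟨(i', j'), hj'⟩ = i' := rfl
      rw [he1, he2]
      congr 1
      by_cases hii : i = i'
      · subst hii; simp [Matrix.one_apply]
      · have : ((i, j') : Fin m × Fin s) ≠ (i', j') := by
          simp [Prod.ext_iff, hii]
        simp [Matrix.one_apply, hii, this]
    rw [heq, Matrix.det_submatrix_equiv_self]
  rw [hdet]
  rw [Finset.prod_eq_zero_iff]
  constructor
  · rintro ⟨k, -, hk⟩
    exact ⟨OrderDual.ofDual k, (mem_spectrum_iff_det_eq_zero _ _).2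
      ((hblock (OrderDual.ofDual k)).symm ▸ hk)⟩
  · rintro ⟨j, hj⟩
    exact ⟨OrderDual.toDual j, Finset.mem_univ _,
      (hblock j).symm ▸ (mem_spectrum_iff_det_eq_zero _ _).1 hj⟩
end

section
/- Let T be a tree on n vertices with edge weights that are nonsingular s×s real matrices, and let L be its matrix-weighted Laplacian. For any vertex v, the principal submatrix L_v obtained by deleting the row block and column block corresponding to v satisfies det(L_v) = ∏_{e ∈ E} det(W(e)), the product of the determinants of all edge weight matrices. -/
open scoped Classical
open Matrix

/-- The block Laplacian matrix of a graph whose edges carry `d × d` real matrix weights. -/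
noncomputable def lap {V : Type*} [Fintype V] (G : SimpleGraph V) (d : ℕ)
    (W : Sym2 V → Matrix (Fin d) (Fin d) ℝ) :
    Matrix (V × Fin d) (V × Fin d) ℝ :=
  Matrix.of fun p q =>
    if p.1 = q.1 then (∑ x ∈ G.neighborFinset p.1, W (Sym2.mk p.1 x)) p.2 q.2
    else if G.Adj p.1 q.1 then -(W (Sym2.mk p.1 q.1)) p.2 q.2 else 0

set_option linter.unusedSectionVars false
set_option linter.unnecessarySimpa false
set_option maxHeartbeats 1000000

namespace DetLapAux

variable {V : Type*} [Fintype V] [DecidableEq V] {G : SimpleGraph V}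

lemma exists_leaf_ne (hT : G.IsTree) {u v : V} (huv : u ≠ v) :
    ∃ w, w ≠ v ∧ G.degree w = 1 := by
  have hcard : 1 < Fintype.card V := Fintype.one_lt_card_iff_nontrivial.mpr ⟨⟨u, v, huv⟩⟩
  have hdeg : ∀ a : V, 1 ≤ G.degree a := by
    intro a
    obtain ⟨b, hb⟩ := Fintype.exists_ne_of_one_lt_card hcard a
    obtain ⟨p⟩ := hT.isConnected.preconnected a b
    rw [Nat.succ_le_iff, G.degree_pos_iff_exists_adj]
    cases p with
    | nil => exact absurd rfl hb.symm
    | cons h q => exact ⟨_, h⟩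
  by_contra hcon
  push_neg at hcon
  have h2 : ∀ w ∈ Finset.univ.erase v, 2 ≤ G.degree w := by
    intro w hw
    have h1 := hdeg w
    have hne := hcon w (Finset.ne_of_mem_erase hw)
    omega
  have hsum := G.sum_degrees_eq_twice_card_edges
  have hE : G.edgeFinset.card + 1 = Fintype.card V := hT.card_edgeFinset
  have hsplit : G.degree v + ∑ x ∈ Finset.univ.erase v, G.degree x = ∑ x, G.degree x :=
    Finset.add_sum_erase (M := ℕ) _ (fun x => G.degree x) (Finset.mem_univ v)
  have hge : (Finset.univ.erase v).card • 2 ≤ ∑ x ∈ Finset.univ.erase v, G.degree x :=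
    Finset.card_nsmul_le_sum _ _ _ h2
  have hc : (Finset.univ.erase v).card = Fintype.card V - 1 := by
    rw [Finset.card_erase_of_mem (Finset.mem_univ v), Finset.card_univ]
  have hv := hdeg v
  rw [hc] at hge
  simp only [smul_eq_mul] at hge
  omega

lemma leaf_adj_iff (hdeg : G.degree u = 1) {w : V} (hw : G.Adj u w) :
    ∀ x, G.Adj u x ↔ x = w := by
  have hcard : (G.neighborFinset u).card = 1 := by
    rw [G.card_neighborFinset_eq_degree, hdeg]
  obtain ⟨a, ha⟩ := Finset.card_eq_one.mp hcard
  have hwa : w = a := by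
    have := (SimpleGraph.mem_neighborFinset G u w).mpr hw
    rw [ha] at this; simpa using this
  intro x
  rw [← SimpleGraph.mem_neighborFinset, ha, Finset.mem_singleton, hwa]

lemma not_mem_support_of_leaf (hdeg : G.degree u = 1) {a b : V} (ha : a ≠ u) (hb : b ≠ u)
    (p : G.Walk a b) (hp : p.IsPath) : u ∉ p.support := by
  intro hu
  obtain ⟨w0, hw0⟩ := G.degree_pos_iff_exists_adj u |>.mp (by omega)
  have huniq := leaf_adj_iff hdeg hw0
  set q := p.takeUntil u hu with hqdef
  set r := p.dropUntil u hu with hrdef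
  have hqr : q.append r = p := p.take_spec hu
  have hq : q.IsPath := hp.takeUntil hu
  have hr : r.IsPath := hp.dropUntil hu
  -- last vertex before u in q is w0
  obtain ⟨x, hux, t, hqrev⟩ := SimpleGraph.Walk.exists_eq_cons_of_ne (Ne.symm ha) q.reverse
  have hxw : x = w0 := (huniq x).mp hux
  have hwq : w0 ∈ q.support := by
    have : x ∈ q.reverse.support := by
      rw [hqrev]; simp [SimpleGraph.Walk.support_cons]
    rwa [SimpleGraph.Walk.support_reverse, List.mem_reverse, hxw] at this
  obtain ⟨y, huy, t', hrcons⟩ := SimpleGraph.Walk.exists_eq_cons_of_ne (Ne.symm hb) r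
  have hyw : y = w0 := (huniq y).mp huy
  have hwr : w0 ∈ r.support.tail := by
    rw [hrcons, SimpleGraph.Walk.support_cons]
    simpa [← hyw] using t'.start_mem_support
  have hnodup := hp.support_nodup
  rw [← hqr, SimpleGraph.Walk.support_append] at hnodup
  exact (List.disjoint_of_nodup_append hnodup) hwq hwr

lemma isTree_induce_of_leaf (hT : G.IsTree) (hdeg : G.degree u = 1) :
    (G.induce {x : V | x ≠ u}).IsTree := by
  obtain ⟨w0, hw0⟩ := G.degree_pos_iff_exists_adj u |>.mp (by omega)
  have hwu : w0 ≠ u := hw0.ne'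
  constructor
  · apply SimpleGraph.induce_connected_of_patches w0 hwu
    intro b hb
    obtain ⟨p0⟩ := hT.isConnected.preconnected w0 b
    set p := p0.toPath
    have hsub : {x | x ∈ (p : G.Walk w0 b).support} ⊆ {x : V | x ≠ u} := by
      intro x hx
      have hns := not_mem_support_of_leaf hdeg hwu hb (p : G.Walk w0 b) p.2
      intro hxu
      exact hns (hxu ▸ hx)
    refine ⟨{x | x ∈ (p : G.Walk w0 b).support}, hsub,
      (p : G.Walk w0 b).start_mem_support, (p : G.Walk w0 b).end_mem_support, ?_⟩
    exact ((p : G.Walk w0 b).connected_induce_support).preconnected _ _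
  · intro x c hc
    exact hT.IsAcyclic (c.map (SimpleGraph.Embedding.induce _).toHom)
      (hc.map Subtype.val_injective)


universe u_

lemma det_lap_aux : ∀ (n : ℕ) (V : Type u_) [Fintype V] [DecidableEq V]
    (G : SimpleGraph V), Fintype.card V ≤ n → G.IsTree →
    ∀ (d : ℕ) (W : Sym2 V → Matrix (Fin d) (Fin d) ℝ),
    (∀ e ∈ G.edgeSet, IsUnit (W e)) → ∀ (v : V),
    ((lap G d W).submatrix
        (fun p : {x : V // x ≠ v} × Fin d => ((p.1 : V), p.2))
        (fun p : {x : V // x ≠ v} × Fin d => ((p.1 : V), p.2))).det =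
      ∏ e ∈ G.edgeFinset, (W e).det := by
  intro n
  induction n with
  | zero =>
    intro V _ _ G hcard hT d W hW v
    have := Fintype.card_pos_iff.mpr ⟨v⟩
    omega
  | succ n ih =>
    intro V _ _ G hcard hT d W hW v
    by_cases hex : ∃ u : V, u ≠ v
    case neg =>
      have hall : ∀ x : V, x = v := fun x => not_not.mp (fun h => hex ⟨x, h⟩)
      haveI : IsEmpty {x : V // x ≠ v} := ⟨fun x => x.2 (hall x.1)⟩
      have hE : G.edgeFinset = ∅ := by
        ext e
        induction e with
        | _ a b =>
          simp only [SimpleGraph.mem_edgeFinset, Finset.notMem_empty, iff_false]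
          intro h
          exact (G.mem_edgeSet.mp h).ne ((hall a).trans (hall b).symm)
      rw [Matrix.det_isEmpty, hE, Finset.prod_empty]
    case pos =>
      obtain ⟨u₀, hu₀⟩ := hex
      obtain ⟨u, huv, hdeg⟩ := exists_leaf_ne hT hu₀
      obtain ⟨w, hadj⟩ := G.degree_pos_iff_exists_adj u |>.mp (by omega)
      have huniq := leaf_adj_iff hdeg hadj
      have hwu : w ≠ u := hadj.ne'
      have he₀ : Sym2.mk u w ∈ G.edgeSet := hadj
      have hNu : G.neighborFinset u = {w} := by
        ext x; simp [SimpleGraph.mem_neighborFinset, huniq x]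
      set G' := G.induce {x : V | x ≠ u} with hG'def
      set W' : Sym2 {x : V | x ≠ u} → Matrix (Fin d) (Fin d) ℝ :=
        fun e => W (e.map Subtype.val) with hW'def
      have hT' : G'.IsTree := isTree_induce_of_leaf hT hdeg
      have hW' : ∀ e ∈ G'.edgeSet, IsUnit (W' e) := by
        intro e he
        induction e with
        | _ a b =>
          apply hW
          have : G.Adj a.1 b.1 := he
          simpa [Sym2.map_pair_eq] using this
      have hvu : v ∈ {x : V | x ≠ u} := Ne.symm huv
      set v' : {x : V | x ≠ u} := ⟨v, hvu⟩ with hv'def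
      have hcards : Fintype.card {x : V | x ≠ u} = Fintype.card V - 1 := by
        simp [Set.coe_setOf]
      have hcard' : Fintype.card {x : V | x ≠ u} ≤ n := by
        have hpos := Fintype.card_pos_iff.mpr ⟨v⟩
        omega
      have IH := ih _ G' hcard' hT' d W' hW' v'
      -- the reindexing equivalence
      set A := W (Sym2.mk u w) with hAdef
      let ε : (Fin d ⊕ ({y : {x : V | x ≠ u} // y ≠ v'} × Fin d)) ≃
          ({x : V // x ≠ v} × Fin d) :=
      { toFun := fun p => match p with
          | Sum.inl j => (⟨u, huv⟩, j)
          | Sum.inr (y, j) => (⟨y.1.1, fun h => y.2 (Subtype.ext h)⟩, j)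
        invFun := fun p => if h : (p.1 : V) = u then Sum.inl p.2
          else Sum.inr (⟨⟨p.1.1, h⟩, fun hh => p.1.2 (congrArg Subtype.val hh)⟩, p.2)
        left_inv := by
          rintro (j | ⟨y, j⟩)
          · simp
          · have : (y.1.1 : V) ≠ u := y.1.2
            simp [this]
        right_inv := by
          rintro ⟨⟨x, hxv⟩, j⟩
          by_cases h : x = u
          · subst h; simp
          · simp [h] }
      set B : Matrix (Fin d) ({y : {x : V | x ≠ u} // y ≠ v'} × Fin d) ℝ :=
        Matrix.of (fun j q => if (q.1.1.1 : V) = w then (-A) j q.2 else 0) with hBdef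
      set C : Matrix ({y : {x : V | x ≠ u} // y ≠ v'} × Fin d) (Fin d) ℝ :=
        Matrix.of (fun p j => if (p.1.1.1 : V) = w then (-A) p.2 j else 0) with hCdef
      set D : Matrix ({y : {x : V | x ≠ u} // y ≠ v'} × Fin d)
          ({y : {x : V | x ≠ u} // y ≠ v'} × Fin d) ℝ :=
        Matrix.of (fun p q => lap G d W (p.1.1.1, p.2) (q.1.1.1, q.2)) with hDdef
      have key : ((lap G d W).submatrix
          (fun p : {x : V // x ≠ v} × Fin d => ((p.1 : V), p.2))
          (fun p : {x : V // x ≠ v} × Fin d => ((p.1 : V), p.2))).det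
          = (Matrix.fromBlocks A B C D).det := by
        rw [← Matrix.det_submatrix_equiv_self ε, Matrix.submatrix_submatrix]
        congr 1
        ext p q
        match p, q with
        | Sum.inl i, Sum.inl j =>
          simp only [Function.comp, Matrix.submatrix_apply, Matrix.fromBlocks_apply₁₁]
          show lap G d W (u, i) (u, j) = A i j
          simp [lap, hNu, hAdef]
        | Sum.inl i, Sum.inr q =>
          simp only [Function.comp, Matrix.submatrix_apply, Matrix.fromBlocks_apply₁₂]
          show lap G d W (u, i) (q.1.1.1, q.2) = B i q
          have hqu : (q.1.1.1 : V) ≠ u := q.1.1.2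
          by_cases hq : (q.1.1.1 : V) = w
          · simp [lap, hBdef, Ne.symm hqu, hq, hAdef, hadj, Ne.symm hwu]
          · have hnadj : ¬ G.Adj u q.1.1.1 := fun h => hq ((huniq q.1.1.1).mp h)
            simp [lap, hBdef, Ne.symm hqu, hq, hnadj]
        | Sum.inr p, Sum.inl j =>
          simp only [Function.comp, Matrix.submatrix_apply, Matrix.fromBlocks_apply₂₁]
          show lap G d W (p.1.1.1, p.2) (u, j) = C p j
          have hpu : (p.1.1.1 : V) ≠ u := p.1.1.2
          have hswap : Sym2.mk (p.1.1.1 : V) u = Sym2.mk u (p.1.1.1 : V) :=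
            Sym2.eq_swap
          by_cases hp : (p.1.1.1 : V) = w
          · simp only [lap, Matrix.of_apply, hCdef, hp]
            rw [if_neg hwu, if_pos hadj.symm, Sym2.eq_swap]
            simp [hAdef]
          · have hnadj : ¬ G.Adj p.1.1.1 u := fun h => hp ((huniq _).mp h.symm)
            simp [lap, hCdef, hpu, hp, hnadj]
        | Sum.inr p, Sum.inr q =>
          simp only [Function.comp, Matrix.submatrix_apply, Matrix.fromBlocks_apply₂₂]
          rfl
      haveI : Invertible A := ((hW _ he₀).nonempty_invertible).some
      rw [key, Matrix.det_fromBlocks₁₁]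
      -- Schur complement computation
      have hCAB : ∀ p q, (C * ⅟A * B) p q =
          if (p.1.1.1 : V) = w ∧ (q.1.1.1 : V) = w then A p.2 q.2 else 0 := by
        intro p q
        have hCA : ∀ z, (C * ⅟A) p z =
            if (p.1.1.1 : V) = w then ((-A) * ⅟A) p.2 z else 0 := by
          intro z
          rw [Matrix.mul_apply]
          by_cases hp : (p.1.1.1 : V) = w
          · rw [if_pos hp, Matrix.mul_apply]
            apply Finset.sum_congr rfl
            intro t _
            simp [hCdef, hp]
          · rw [if_neg hp]
            apply Finset.sum_eq_zero
            intro t _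
            simp [hCdef, hp]
        rw [Matrix.mul_apply]
        by_cases hp : (p.1.1.1 : V) = w
        · by_cases hq : (q.1.1.1 : V) = w
          · rw [if_pos ⟨hp, hq⟩]
            have : ∀ z, (C * ⅟A) p z * B z q = ((-A) * ⅟A) p.2 z * (-A) z q.2 := by
              intro z
              rw [hCA z, if_pos hp]
              simp [hBdef, hq]
            rw [Finset.sum_congr rfl (fun z _ => this z), ← Matrix.mul_apply]
            have hABA : (-A) * ⅟A * (-A) = A := by
              simp [Matrix.neg_mul, Matrix.mul_neg, mul_invOf_self]
            rw [hABA]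
          · rw [if_neg (by tauto)]
            apply Finset.sum_eq_zero
            intro z _
            simp [hBdef, hq]
        · rw [if_neg (by tauto)]
          apply Finset.sum_eq_zero
          intro z _
          rw [hCA z, if_neg hp, zero_mul]
      have hNsum : ∀ (a : {x : V | x ≠ u}),
          (∑ z ∈ G'.neighborFinset a, W' (Sym2.mk a z)) =
          ∑ z ∈ (G.neighborFinset a.1).erase u, W (Sym2.mk a.1 z) := by
        intro a
        refine Finset.sum_nbij' (i := fun z => (z.1 : V))
          (j := fun z => if h : z = u then a else ⟨z, h⟩) ?_ ?_ ?_ ?_ ?_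
        · intro z hz
          have hadj' : G.Adj a.1 z.1 := (G'.mem_neighborFinset a z).mp hz
          refine Finset.mem_erase.mpr ⟨z.2, ?_⟩
          exact (G.mem_neighborFinset a.1 z.1).mpr hadj'
        · intro z hz
          obtain ⟨hz1, hz2⟩ := Finset.mem_erase.mp hz
          rw [dif_neg hz1]
          have hadj' : G.Adj a.1 z := (G.mem_neighborFinset a.1 z).mp hz2
          exact (G'.mem_neighborFinset a ⟨z, hz1⟩).mpr hadj'
        · intro z hz
          rw [dif_neg z.2]
        · intro z hz
          rw [dif_neg (Finset.mem_erase.mp hz).1]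
        · intro z hz
          simp [hW'def, Sym2.map_pair_eq]
      have hschur : D - C * ⅟A * B = (lap G' d W').submatrix
          (fun p : {x : {x : V | x ≠ u} // x ≠ v'} × Fin d => ((p.1 : {x : V | x ≠ u}), p.2))
          (fun p : {x : {x : V | x ≠ u} // x ≠ v'} × Fin d => ((p.1 : {x : V | x ≠ u}), p.2)) := by
        ext p q
        obtain ⟨⟨⟨x, hxu⟩, hxv⟩, i⟩ := p
        obtain ⟨⟨⟨y, hyu⟩, hyv⟩, j⟩ := q
        rw [Matrix.sub_apply, hCAB]
        simp only [hDdef, Matrix.of_apply, Matrix.submatrix_apply]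
        show lap G d W (x, i) (y, j) - _ = lap G' d W' (⟨x, hxu⟩, i) (⟨y, hyu⟩, j)
        by_cases hxy : x = y
        · subst hxy
          have h1 : (⟨x, hxu⟩ : {x : V | x ≠ u}) = (⟨x, hyu⟩ : {x : V | x ≠ u}) := rfl
          rw [lap, lap]
          simp only [Matrix.of_apply]
          simp only [if_true]
          erw [hNsum ⟨x, hxu⟩]
          dsimp only
          by_cases hxw : x = w
          · rw [if_pos ⟨hxw, hxw⟩]
            have humem : u ∈ G.neighborFinset x :=
              (G.mem_neighborFinset x u).mpr (by rw [hxw]; exact hadj.symm)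
            have hsum2 := Finset.sum_erase_add (G.neighborFinset x)
              (fun z => W (Sym2.mk x z)) humem
            have hsw : Sym2.mk x u = Sym2.mk u w := by
              rw [hxw]; exact Sym2.eq_swap
            rw [← hsum2]
            simp [hsw, hAdef]
          · have hnm : u ∉ G.neighborFinset x := by
              rw [G.mem_neighborFinset]
              exact fun h => hxw ((huniq x).mp h.symm)
            rw [Finset.erase_eq_of_notMem hnm, if_neg (fun h => hxw h.1)]
            simp
        · have h1 : (⟨x, hxu⟩ : {x : V | x ≠ u}) ≠ ⟨y, hyu⟩ := fun h => hxy (congrArg Subtype.val h)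
          have h2 : ¬ (x = w ∧ y = w) := fun h => hxy (h.1.trans h.2.symm)
          rw [lap, lap]
          simp only [Matrix.of_apply]
          rw [if_neg hxy, if_neg h1, if_neg h2, sub_zero]
          have hadj' : G'.Adj ⟨x, hxu⟩ ⟨y, hyu⟩ ↔ G.Adj x y := by
            simp [hG'def]
          by_cases hA2 : G.Adj x y
          · rw [if_pos hA2, if_pos (hadj'.mpr hA2)]
            simp [hW'def, Sym2.map_pair_eq]
          · rw [if_neg hA2, if_neg (fun h => hA2 (hadj'.mp h))]
      rw [hschur, IH]
      -- product over edges
      have hprod : ∏ e' ∈ G'.edgeFinset, (W' e').det =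
          ∏ e ∈ G.edgeFinset.erase (Sym2.mk u w), (W e).det := by
        refine Finset.prod_bij (fun e' _ => Sym2.map Subtype.val e') ?_ ?_ ?_ ?_
        · intro e' he'
          induction e' with
          | _ a b =>
            rw [SimpleGraph.mem_edgeFinset] at he'
            have hadj' : G.Adj a.1 b.1 := he'
            refine Finset.mem_erase.mpr ⟨?_, ?_⟩
            · intro h
              have hmem : u ∈ Sym2.map Subtype.val (Sym2.mk a b) := by
                rw [h]; exact Sym2.mem_mk_left u w
              rw [Sym2.mem_map] at hmem
              obtain ⟨c, _, hc⟩ := hmem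
              exact c.2 hc
            · rw [SimpleGraph.mem_edgeFinset, Sym2.map_pair_eq]
              exact hadj'
        · intro a ha b hb h
          exact Sym2.map.injective Subtype.val_injective h
        · intro e he
          obtain ⟨hne, hmem⟩ := Finset.mem_erase.mp he
          induction e with
          | _ a b =>
            rw [SimpleGraph.mem_edgeFinset, SimpleGraph.mem_edgeSet] at hmem
            have ha : a ≠ u := by
              intro h; subst h
              exact hne (by rw [(huniq b).mp hmem])
            have hb : b ≠ u := by
              intro h; subst h
              have : a = w := (huniq a).mp hmem.symm
              subst this
              exact hne Sym2.eq_swap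
            refine ⟨Sym2.mk ⟨a, ha⟩ ⟨b, hb⟩, ?_, ?_⟩
            · rw [SimpleGraph.mem_edgeFinset]
              exact hmem
            · rw [Sym2.map_pair_eq]
        · intro e' he'
          rfl
      erw [hprod]
      exact Finset.mul_prod_erase G.edgeFinset (fun e => (W e).det)
        (SimpleGraph.mem_edgeFinset.mpr he₀)



end DetLapAux

/-- For a tree with nonsingular matrix edge weights, the determinant of the principal
submatrix of the Laplacian obtained by deleting the row and column blocks of a vertex `v`
is the product of the determinants of all the edge weights. -/
theorem det_lap_principal_submatrix {V : Type*} [Fintype V] [DecidableEq V]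
    (G : SimpleGraph V) (hT : G.IsTree) (d : ℕ)
    (W : Sym2 V → Matrix (Fin d) (Fin d) ℝ)
    (hW : ∀ e ∈ G.edgeSet, IsUnit (W e)) (v : V) :
    ((lap G d W).submatrix
        (fun p : {x : V // x ≠ v} × Fin d => ((p.1 : V), p.2))
        (fun p : {x : V // x ≠ v} × Fin d => ((p.1 : V), p.2))).det =
      ∏ e ∈ G.edgeFinset, (W e).det :=
  DetLapAux.det_lap_aux (Fintype.card V) V G le_rfl hT d W hW v
end

section
/- Let T be a tree with positive definite s×s matrix edge weights, with oriented incidence matrix Q (whose (u,e) block is ±√(W(e)) for the endpoints of e and 0 otherwise). For any vertex v, the matrix Q_v obtained by deleting the row block of v is invertible, and Q_v⁻¹ equals the path matrix P_v whose column block at vertex u ≠ v is the incidence block vector of the path from u to v (entries ±(√(W(e)))⁻¹ for edges e on the path, with sign according to orientation, and 0 otherwise). -/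
open scoped Classical
open Matrix

/-- The unique path in a tree between two vertices. -/
noncomputable def pathWalk {V : Type*} {G : SimpleGraph V} (hT : G.IsTree) (u v : V) :
    G.Walk u v := (hT.existsUnique_path u v).choose

/-- The list of edges of the unique path between two vertices of a tree. -/
noncomputable def pathEdges {V : Type*} {G : SimpleGraph V} (hT : G.IsTree) (u v : V) :
    List (Sym2 V) := (pathWalk hT u v).edges

lemma isPath_pathWalk {V : Type*} {G : SimpleGraph V} (hT : G.IsTree) (u v : V) :
    (pathWalk hT u v).IsPath := (hT.existsUnique_path u v).choose_spec.1

lemma eq_pathWalk {V : Type*} {G : SimpleGraph V} (hT : G.IsTree) {u v : V} (p : G.Walk u v)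
    (hp : p.IsPath) : p = pathWalk hT u v :=
  (hT.existsUnique_path u v).choose_spec.2 p hp

lemma length_eq_dist {V : Type*} {G : SimpleGraph V} (hT : G.IsTree) {u v : V} (p : G.Walk u v)
    (hp : p.IsPath) : p.length = G.dist u v := by
  obtain ⟨q, hq⟩ := hT.isConnected.exists_walk_length_eq_dist u v
  have h1 : p = q.bypass :=
    (eq_pathWalk hT p hp).trans (eq_pathWalk hT q.bypass q.bypass_isPath).symm
  have h2 : p.length ≤ G.dist u v := by
    rw [h1, ← hq]; exact q.length_bypass_le
  exact le_antisymm h2 (SimpleGraph.dist_le p)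

lemma dist_shift {V : Type*} {G : SimpleGraph V} (hT : G.IsTree) {w x v y : V} (h : G.Adj w x)
    (q : G.Walk x v) (hq : q.IsPath) (hw : w ∉ q.support) (hy : y ∈ q.support) :
    G.dist w y = G.dist x y + 1 := by
  have hr : (q.takeUntil y hy).IsPath := hq.takeUntil hy
  have hw' : w ∉ (q.takeUntil y hy).support := fun hws => hw (q.support_takeUntil_subset hy hws)
  have hc : (SimpleGraph.Walk.cons h (q.takeUntil y hy)).IsPath := hr.cons hw'
  have h1 := length_eq_dist hT _ hc
  have h2 := length_eq_dist hT _ hr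
  rw [SimpleGraph.Walk.length_cons] at h1
  omega

lemma key_sum {V : Type*} [DecidableEq V] {G : SimpleGraph V} (hT : G.IsTree)
    (init term : Sym2 V → V)
    (horient : ∀ e ∈ G.edgeSet, e = Sym2.mk (init e) (term e))
    (v u : V) : ∀ (w : V) (p : G.Walk w v), p.IsPath →
    ((p.edges).map (fun e =>
      (if u = init e then (1:ℝ) else if u = term e then -1 else 0) *
      (if G.dist w (init e) < G.dist w (term e) then 1 else -1))).sum
    = (if u = w then 1 else 0) - (if u = v then 1 else 0) := by
  intro w p
  induction p with
  | nil => simp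
  | @cons w x v h q ih =>
    intro hp
    have hpq : q.IsPath := hp.of_cons
    have hwq : w ∉ q.support := ((SimpleGraph.Walk.cons_isPath_iff h q).1 hp).2
    rw [SimpleGraph.Walk.edges_cons, List.map_cons, List.sum_cons]
    have htail : ∀ e ∈ q.edges,
        (if u = init e then (1:ℝ) else if u = term e then -1 else 0) *
          (if G.dist w (init e) < G.dist w (term e) then 1 else -1) =
        (if u = init e then (1:ℝ) else if u = term e then -1 else 0) *
          (if G.dist x (init e) < G.dist x (term e) then 1 else -1) := by
      intro e he
      have heE : e ∈ G.edgeSet := q.edges_subset_edgeSet he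
      have he' : Sym2.mk (init e) (term e) ∈ q.edges := by rw [← horient e heE]; exact he
      have h1 : init e ∈ q.support := q.fst_mem_support_of_mem_edges he'
      have h2 : term e ∈ q.support := q.snd_mem_support_of_mem_edges he'
      rw [dist_shift hT h q hpq hwq h1, dist_shift hT h q hpq hwq h2]
      simp [Nat.add_lt_add_iff_right]
    rw [List.map_congr_left htail, ih hpq]
    have heE : s(w, x) ∈ G.edgeSet := h
    have horiw := horient _ heE
    have hwx : w ≠ x := h.ne
    have hdww : G.dist w w = 0 := SimpleGraph.dist_self
    have hdwx : G.dist w x = 1 := SimpleGraph.dist_eq_one_iff_adj.2 h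
    rcases Sym2.eq_iff.1 horiw with ⟨hiw, htx⟩ | ⟨hiw, htx⟩
    · rw [← hiw, ← htx, hdww, hdwx, if_pos Nat.zero_lt_one]
      clear hiw htx horiw horient htail ih hp hpq hwq heE h q hT hdww hdwx
      split_ifs <;> simp_all
    · rw [← hiw, ← htx, hdww, hdwx, if_neg (Nat.not_lt.2 (Nat.zero_le 1))]
      clear hiw htx horiw horient htail ih hp hpq hwq heE h q hT hdww hdwx
      split_ifs <;> simp_all

/-- For a tree with positive definite matrix edge weights and an orientation of its edges
(given by `init` and `term`), with `R e` the positive definite square root of the weight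
`W e`: the incidence matrix `Q_v` with the row block of `v` deleted is invertible, with
inverse the path matrix `P_v`. -/
theorem incidence_inv_eq_path_matrix {V : Type*} [Fintype V] [DecidableEq V]
    (G : SimpleGraph V) (hT : G.IsTree) (d : ℕ)
    (W R : Sym2 V → Matrix (Fin d) (Fin d) ℝ)
    (init term : Sym2 V → V)
    (horient : ∀ e ∈ G.edgeSet, e = Sym2.mk (init e) (term e))
    (hW : ∀ e ∈ G.edgeSet, (W e).PosDef)
    (hR : ∀ e ∈ G.edgeSet, (R e).PosDef ∧ R e * R e = W e)
    (v : V) :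
    letI Qv : Matrix ({x : V // x ≠ v} × Fin d) (↥G.edgeSet × Fin d) ℝ :=
      Matrix.of fun p q =>
        if (p.1 : V) = init (q.1 : Sym2 V) then R (q.1 : Sym2 V) p.2 q.2
        else if (p.1 : V) = term (q.1 : Sym2 V) then -(R (q.1 : Sym2 V)) p.2 q.2
        else 0
    letI Pv : Matrix (↥G.edgeSet × Fin d) ({x : V // x ≠ v} × Fin d) ℝ :=
      Matrix.of fun q p =>
        if (q.1 : Sym2 V) ∈ pathEdges hT (p.1 : V) v then
          (if G.dist (p.1 : V) (init (q.1 : Sym2 V)) <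
              G.dist (p.1 : V) (term (q.1 : Sym2 V)) then
            (R (q.1 : Sym2 V))⁻¹ q.2 p.2
          else -((R (q.1 : Sym2 V))⁻¹) q.2 p.2)
        else 0
    Qv * Pv = 1 ∧ Pv * Qv = 1 := by
  set Qv : Matrix ({x : V // x ≠ v} × Fin d) (↥G.edgeSet × Fin d) ℝ :=
    Matrix.of fun p q =>
      if (p.1 : V) = init (q.1 : Sym2 V) then R (q.1 : Sym2 V) p.2 q.2
      else if (p.1 : V) = term (q.1 : Sym2 V) then -(R (q.1 : Sym2 V)) p.2 q.2
      else 0 with hQvdef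
  set Pv : Matrix (↥G.edgeSet × Fin d) ({x : V // x ≠ v} × Fin d) ℝ :=
    Matrix.of fun q p =>
      if (q.1 : Sym2 V) ∈ pathEdges hT (p.1 : V) v then
        (if G.dist (p.1 : V) (init (q.1 : Sym2 V)) <
            G.dist (p.1 : V) (term (q.1 : Sym2 V)) then
          (R (q.1 : Sym2 V))⁻¹ q.2 p.2
        else -((R (q.1 : Sym2 V))⁻¹) q.2 p.2)
      else 0 with hPvdef
  have hcard : Fintype.card ({x : V // x ≠ v}) = Fintype.card (↥G.edgeSet) := by
    have h1 : Fintype.card (↥G.edgeSet) = G.edgeFinset.card := by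
      rw [SimpleGraph.edgeFinset, Set.toFinset_card]
    have h2 := hT.card_edgeFinset
    have h3 : Fintype.card ({x : V // x ≠ v}) = Fintype.card V - 1 := by
      rw [Fintype.card_subtype_compl, Fintype.card_subtype_eq]
    have h4 : 0 < Fintype.card V := Fintype.card_pos_iff.2 ⟨v⟩
    omega
  have e : ({x : V // x ≠ v} × Fin d) ≃ (↥G.edgeSet × Fin d) :=
    Equiv.prodCongr (Fintype.equivOfCardEq hcard) (Equiv.refl _)
  have h1 : Qv * Pv = 1 := by
    ext ⟨⟨u, hu⟩, i⟩ ⟨⟨w, hw⟩, j⟩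
    rw [Matrix.mul_apply, Fintype.sum_prod_type]
    have hstep : ∀ eg : ↥G.edgeSet,
        (∑ k, Qv (⟨u, hu⟩, i) (eg, k) * Pv (eg, k) (⟨w, hw⟩, j)) =
          ((if (eg : Sym2 V) ∈ pathEdges hT w v then
              (if u = init (eg : Sym2 V) then (1:ℝ) else if u = term (eg : Sym2 V) then -1 else 0) *
              (if G.dist w (init (eg : Sym2 V)) < G.dist w (term (eg : Sym2 V)) then 1 else -1)
            else 0)) * (if i = j then (1:ℝ) else 0) := by
      rintro ⟨eg, he⟩
      have hinv : R eg * (R eg)⁻¹ = 1 :=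
        Matrix.mul_nonsing_inv _ (isUnit_iff_ne_zero.2 (hR eg he).1.det_pos.ne')
      have hQ : ∀ k, Qv (⟨u, hu⟩, i) (⟨eg, he⟩, k) =
          (if u = init eg then (1:ℝ) else if u = term eg then -1 else 0) * R eg i k := by
        intro k
        simp only [hQvdef, Matrix.of_apply]
        split_ifs <;> simp
      have hP : ∀ k, Pv (⟨eg, he⟩, k) (⟨w, hw⟩, j) =
          (if eg ∈ pathEdges hT w v then
            (if G.dist w (init eg) < G.dist w (term eg) then (1:ℝ) else -1) else 0) *
            (R eg)⁻¹ k j := by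
        intro k
        simp only [hPvdef, Matrix.of_apply]
        split_ifs <;> simp
      simp only [hQ, hP]
      have : ∀ k : Fin d,
          ((if u = init eg then (1:ℝ) else if u = term eg then -1 else 0) * R eg i k) *
          ((if eg ∈ pathEdges hT w v then
            (if G.dist w (init eg) < G.dist w (term eg) then (1:ℝ) else -1) else 0) *
            (R eg)⁻¹ k j) =
          ((if eg ∈ pathEdges hT w v then
              (if u = init eg then (1:ℝ) else if u = term eg then -1 else 0) *
              (if G.dist w (init eg) < G.dist w (term eg) then 1 else -1)
            else 0)) * (R eg i k * (R eg)⁻¹ k j) := by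
        intro k; split_ifs <;> ring
      rw [Finset.sum_congr rfl fun k _ => this k, ← Finset.mul_sum, ← Matrix.mul_apply, hinv,
        Matrix.one_apply]
    rw [Finset.sum_congr rfl fun eg _ => hstep eg, ← Finset.sum_mul]
    have hpath := isPath_pathWalk hT w v
    have hnodup : (pathEdges hT w v).Nodup := hpath.edges_nodup
    have hsub : (pathEdges hT w v).toFinset ⊆ G.edgeSet.toFinset := by
      intro x hx
      rw [List.mem_toFinset] at hx
      rw [Set.mem_toFinset]
      exact (pathWalk hT w v).edges_subset_edgeSet hx
    have hsum : (∑ eg : ↥G.edgeSet,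
        (if (eg : Sym2 V) ∈ pathEdges hT w v then
            (if u = init (eg : Sym2 V) then (1:ℝ) else if u = term (eg : Sym2 V) then -1 else 0) *
            (if G.dist w (init (eg : Sym2 V)) < G.dist w (term (eg : Sym2 V)) then 1 else -1)
          else 0)) = (if u = w then (1:ℝ) else 0) := by
      rw [Finset.sum_set_coe (s := G.edgeSet) (f := fun x : Sym2 V =>
        (if x ∈ pathEdges hT w v then
            (if u = init x then (1:ℝ) else if u = term x then -1 else 0) *
            (if G.dist w (init x) < G.dist w (term x) then 1 else -1)
          else 0))]
      rw [← Finset.sum_subset hsub (by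
        intro x _ hx
        rw [List.mem_toFinset] at hx
        exact if_neg hx)]
      rw [List.sum_toFinset _ hnodup]
      rw [List.map_congr_left (fun x hx => if_pos hx)]
      simp only [pathEdges]
      rw [key_sum hT init term horient v u w (pathWalk hT w v) hpath]
      rw [if_neg hu, sub_zero]
    rw [hsum, Matrix.one_apply]
    by_cases h1 : u = w <;> by_cases h2 : i = j <;>
      simp [h1, h2, Prod.ext_iff, Subtype.ext_iff]
  exact ⟨h1, (Matrix.mul_eq_one_comm_of_equiv e).1 h1⟩
end

section
/- Let T be a tree on n vertices with nonsingular s×s matrix edge weights and Laplacian L. Then I_{ns} - L L⁺ = Jₙ ⊗ (1/n) I_s, where L⁺ is the Moore-Penrose inverse of L. -/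
open scoped Classical
open Matrix

lemma lap_mulVec_apply {V : Type*} [Fintype V] [DecidableEq V]
    (G : SimpleGraph V) (d : ℕ) (W : Sym2 V → Matrix (Fin d) (Fin d) ℝ)
    (x : V × Fin d → ℝ) (v : V) (i : Fin d) :
    (lap G d W).mulVec x (v, i) =
      ∑ u ∈ G.neighborFinset v, ∑ j, W (Sym2.mk v u) i j * (x (v, j) - x (u, j)) := by
  classical
  have hsplit : ∀ u : V, ∀ j : Fin d,
      lap G d W (v, i) (u, j) * x (u, j) =
        (if v = u then (∑ t ∈ G.neighborFinset v, W (Sym2.mk v t)) i j * x (u, j) else 0)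
          + (if G.Adj v u then -(W (Sym2.mk v u) i j) * x (u, j) else 0) := by
    intro u j
    by_cases h1 : v = u
    · subst h1
      simp [lap, G.irrefl]
    · by_cases h2 : G.Adj v u
      · simp [lap, h1, h2]
      · simp [lap, h1, h2]
  have hmv : (lap G d W).mulVec x (v, i)
      = ∑ u : V, ∑ j : Fin d, lap G d W (v, i) (u, j) * x (u, j) := by
    rw [Matrix.mulVec, dotProduct, Fintype.sum_prod_type]
  rw [hmv]
  simp only [hsplit, Finset.sum_add_distrib]
  have e1 : (∑ u : V, ∑ j : Fin d,
      (if v = u then (∑ t ∈ G.neighborFinset v, W (Sym2.mk v t)) i j * x (u, j) else 0))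
      = ∑ u ∈ G.neighborFinset v, ∑ j, W (Sym2.mk v u) i j * x (v, j) := by
    have h1 : ∀ u : V, (∑ j : Fin d,
        (if v = u then (∑ t ∈ G.neighborFinset v, W (Sym2.mk v t)) i j * x (u, j) else 0))
        = if v = u then ∑ j, (∑ t ∈ G.neighborFinset v, W (Sym2.mk v t)) i j * x (u, j)
          else 0 := by
      intro u; split_ifs <;> simp
    simp only [h1, Finset.sum_ite_eq, Finset.mem_univ, if_true]
    have h2 : ∀ j, (∑ t ∈ G.neighborFinset v, W (Sym2.mk v t)) i j * x (v, j)
        = ∑ t ∈ G.neighborFinset v, W (Sym2.mk v t) i j * x (v, j) := by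
      intro j; rw [Matrix.sum_apply, Finset.sum_mul]
    simp only [h2]
    exact Finset.sum_comm
  have e2 : (∑ u : V, ∑ j : Fin d,
      (if G.Adj v u then -(W (Sym2.mk v u) i j) * x (u, j) else 0))
      = ∑ u ∈ G.neighborFinset v, ∑ j, -(W (Sym2.mk v u) i j) * x (u, j) := by
    have h1 : ∀ u : V, (∑ j : Fin d,
        (if G.Adj v u then -(W (Sym2.mk v u) i j) * x (u, j) else 0))
        = if G.Adj v u then ∑ j, -(W (Sym2.mk v u) i j) * x (u, j) else 0 := by
      intro u; split_ifs <;> simp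
    simp only [h1]
    rw [SimpleGraph.neighborFinset_eq_filter, Finset.sum_filter]
  rw [e1, e2, ← Finset.sum_add_distrib]
  refine Finset.sum_congr rfl fun u _ => ?_
  rw [← Finset.sum_add_distrib]
  refine Finset.sum_congr rfl fun j _ => ?_
  ring

lemma lap_colsum {V : Type*} [Fintype V] [DecidableEq V]
    (G : SimpleGraph V) (d : ℕ) (W : Sym2 V → Matrix (Fin d) (Fin d) ℝ)
    (w : V) (i j : Fin d) :
    ∑ v : V, lap G d W (v, i) (w, j) = 0 := by
  classical
  have hsplit : ∀ v : V,
      lap G d W (v, i) (w, j) =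
        (if w = v then (∑ t ∈ G.neighborFinset w, W (Sym2.mk w t)) i j else 0)
          + (if G.Adj w v then -(W (Sym2.mk w v) i j) else 0) := by
    intro v
    by_cases h1 : v = w
    · subst h1
      simp [lap, G.irrefl]
    · by_cases h2 : G.Adj v w
      · have h2' : G.Adj w v := h2.symm
        have he : Sym2.mk v w = Sym2.mk w v := Sym2.eq_swap
        simp [lap, h1, h2, h2', Ne.symm h1, he]
      · have h2' : ¬ G.Adj w v := fun h => h2 h.symm
        simp [lap, h1, h2, h2', Ne.symm h1]
  simp only [hsplit, Finset.sum_add_distrib]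
  rw [Finset.sum_ite_eq, if_pos (Finset.mem_univ w)]
  have e2 : (∑ v : V, (if G.Adj w v then -(W (Sym2.mk w v) i j) else 0))
      = ∑ v ∈ G.neighborFinset w, -(W (Sym2.mk w v) i j) := by
    rw [SimpleGraph.neighborFinset_eq_filter, Finset.sum_filter]
  rw [e2, Matrix.sum_apply]
  simp

lemma lap_transpose {V : Type*} [Fintype V] [DecidableEq V]
    (G : SimpleGraph V) (d : ℕ) (W : Sym2 V → Matrix (Fin d) (Fin d) ℝ) :
    (lap G d W)ᵀ = lap G d (fun e => (W e)ᵀ) := by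
  classical
  ext p q
  obtain ⟨v, i⟩ := p
  obtain ⟨u, j⟩ := q
  simp only [Matrix.transpose_apply, lap, Matrix.of_apply]
  by_cases h1 : v = u
  · subst h1
    simp [Matrix.sum_apply]
  · have h1' : ¬ (u = v) := Ne.symm h1
    by_cases h2 : G.Adj v u
    · have h2' : G.Adj u v := h2.symm
      have he : Sym2.mk u v = Sym2.mk v u := Sym2.eq_swap
      simp [h1, h1', h2, h2', he]
    · have h2' : ¬ G.Adj u v := fun h => h2 h.symm
      simp [h1, h1', h2, h2']

lemma lap_ker {V : Type*} [Fintype V] [DecidableEq V]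
    (G : SimpleGraph V) (hT : G.IsTree) (d : ℕ)
    (W : Sym2 V → Matrix (Fin d) (Fin d) ℝ)
    (hW : ∀ e ∈ G.edgeSet, IsUnit (W e))
    (x : V × Fin d → ℝ) (hx : (lap G d W).mulVec x = 0) (v w : V) (i : Fin d) :
    x (v, i) = x (w, i) := by
  classical
  have hf : ∀ v : V, ∀ i : Fin d,
      ∑ u ∈ G.neighborFinset v, ∑ j, W (Sym2.mk v u) i j * (x (v, j) - x (u, j)) = 0 := by
    intro v i
    rw [← lap_mulVec_apply]
    exact congrFun hx (v, i)
  have key : ∀ a b : V, G.Adj a b → ∀ j, x (a, j) = x (b, j) := by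
    intro a b hab
    have hbr : ¬ (G.deleteEdges {Sym2.mk a b}).Reachable a b := by
      have hb := (SimpleGraph.isAcyclic_iff_forall_adj_isBridge.mp hT.IsAcyclic) hab
      exact SimpleGraph.isBridge_iff.mp hb
    set A : Finset V :=
      Finset.univ.filter (fun u => (G.deleteEdges {Sym2.mk a b}).Reachable a u) with hA
    have hmem : ∀ u, u ∈ A ↔ (G.deleteEdges {Sym2.mk a b}).Reachable a u := by
      intro u; simp [hA]
    have haA : a ∈ A := (hmem a).mpr (SimpleGraph.Reachable.refl a)
    have hbA : b ∉ A := fun h => hbr ((hmem b).mp h)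
    have cross : ∀ p q : V, p ∈ A → q ∈ G.neighborFinset p → q ∉ A → p = a ∧ q = b := by
      intro p q hp hq hqn
      have hadj : G.Adj p q := by rwa [SimpleGraph.mem_neighborFinset] at hq
      have he : Sym2.mk p q = Sym2.mk a b := by
        by_contra hne
        have hadj' : (G.deleteEdges {Sym2.mk a b}).Adj p q := by
          rw [SimpleGraph.deleteEdges_adj]
          exact ⟨hadj, by simpa using hne⟩
        exact hqn ((hmem q).mpr (((hmem p).mp hp).trans hadj'.reachable))
      rcases Sym2.eq_iff.mp he with ⟨rfl, rfl⟩ | ⟨rfl, rfl⟩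
      · exact ⟨rfl, rfl⟩
      · exact absurd hp hbA
    have hsum : ∀ i : Fin d,
        ∑ j, W (Sym2.mk a b) i j * (x (a, j) - x (b, j)) = 0 := by
      intro i
      set T : V → V → ℝ :=
        fun p q => ∑ j, W (Sym2.mk p q) i j * (x (p, j) - x (q, j)) with hTdef
      have hTanti : ∀ p q : V, T p q = -T q p := by
        intro p q
        have he : Sym2.mk p q = Sym2.mk q p := Sym2.eq_swap
        simp only [hTdef, he, ← Finset.sum_neg_distrib]
        refine Finset.sum_congr rfl fun j _ => ?_
        ring
      have h0 : ∑ p ∈ A, ∑ u ∈ G.neighborFinset p, T p u = 0 :=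
        Finset.sum_eq_zero fun p _ => hf p i
      have hsplit : ∀ p : V, (∑ u ∈ G.neighborFinset p, T p u)
          = (∑ u ∈ (G.neighborFinset p).filter (fun u => u ∈ A), T p u)
            + (∑ u ∈ (G.neighborFinset p).filter (fun u => u ∉ A), T p u) :=
        fun p => (Finset.sum_filter_add_sum_filter_not _ _ _).symm
      have hS1 : ∑ p ∈ A, ∑ u ∈ (G.neighborFinset p).filter (fun u => u ∈ A), T p u = 0 := by
        have hfil : ∀ p : V, (G.neighborFinset p).filter (fun u => u ∈ A)
            = A.filter (fun u => G.Adj p u) := by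
          intro p
          ext u
          simp [SimpleGraph.mem_neighborFinset, and_comm]
        simp only [hfil, Finset.sum_filter]
        set S := ∑ p ∈ A, ∑ u ∈ A, (if G.Adj p u then T p u else 0) with hS
        have hanti : ∀ p q : V, (if G.Adj p q then T p q else 0)
            = -(if G.Adj q p then T q p else 0) := by
          intro p q
          by_cases h : G.Adj p q
          · rw [if_pos h, if_pos h.symm, hTanti]
          · rw [if_neg h, if_neg (fun h' => h h'.symm), neg_zero]
        have : S = -S := by
          conv_lhs => rw [hS, Finset.sum_comm]
          rw [hS, ← Finset.sum_neg_distrib]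
          refine Finset.sum_congr rfl fun p _ => ?_
          rw [← Finset.sum_neg_distrib]
          exact Finset.sum_congr rfl fun u _ => hanti u p
        have : S = 0 := by linarith
        exact this
      have hS2 : ∑ p ∈ A, ∑ u ∈ (G.neighborFinset p).filter (fun u => u ∉ A), T p u
          = T a b := by
        rw [Finset.sum_eq_single_of_mem a haA]
        · have hfa : (G.neighborFinset a).filter (fun u => u ∉ A) = {b} := by
            ext u
            simp only [Finset.mem_filter, Finset.mem_singleton]
            constructor
            · rintro ⟨h1, h2⟩
              exact (cross a u haA h1 h2).2
            · rintro rfl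
              exact ⟨by rwa [SimpleGraph.mem_neighborFinset], hbA⟩
          rw [hfa, Finset.sum_singleton]
        · intro p hp hpa
          have hfp : (G.neighborFinset p).filter (fun u => u ∉ A) = ∅ := by
            ext u
            simp only [Finset.mem_filter, Finset.notMem_empty, iff_false, not_and]
            intro h1 h2
            exact hpa ((cross p u hp h1 h2).1)
          rw [hfp, Finset.sum_empty]
      have := h0
      simp only [hsplit, Finset.sum_add_distrib, hS1, hS2, zero_add] at this
      exact this
    -- invertibility step
    have hmve : (W (Sym2.mk a b)).mulVec (fun j => x (a, j) - x (b, j)) = 0 := by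
      funext i
      simpa [Matrix.mulVec, dotProduct] using hsum i
    have hu : IsUnit (W (Sym2.mk a b)) := hW _ (G.mem_edgeSet.mpr hab)
    have hud : IsUnit (W (Sym2.mk a b)).det := (Matrix.isUnit_iff_isUnit_det _).mp hu
    intro j
    have hzero : (fun j => x (a, j) - x (b, j)) = 0 := by
      have h1 : ((W (Sym2.mk a b))⁻¹ * (W (Sym2.mk a b))).mulVec
          (fun j => x (a, j) - x (b, j)) = 0 := by
        rw [← Matrix.mulVec_mulVec, hmve, Matrix.mulVec_zero]
      rwa [Matrix.nonsing_inv_mul _ hud, Matrix.one_mulVec] at h1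
    have := congrFun hzero j
    simpa [sub_eq_zero] using this
  have hwalk : ∀ {p q : V} (_ : G.Walk p q), x (p, i) = x (q, i) := by
    intro p q wlk
    induction wlk with
    | nil => rfl
    | cons h _ ih => exact (key _ _ h i).trans ih
  obtain ⟨p⟩ := hT.isConnected.preconnected v w
  exact hwalk p

/-- For a tree on `n` vertices with nonsingular `d × d` matrix edge weights and Laplacian `L`
with Moore–Penrose inverse `L⁺`, one has `I - L L⁺ = Jₙ ⊗ (1/n) I_d`. -/
theorem one_sub_lap_mul_pinv {V : Type*} [Fintype V] [DecidableEq V]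
    (G : SimpleGraph V) (hT : G.IsTree) (d : ℕ)
    (W : Sym2 V → Matrix (Fin d) (Fin d) ℝ)
    (hW : ∀ e ∈ G.edgeSet, IsUnit (W e))
    (Lp : Matrix (V × Fin d) (V × Fin d) ℝ)
    (h1 : lap G d W * Lp * lap G d W = lap G d W)
    (h2 : Lp * lap G d W * Lp = Lp)
    (h3 : (lap G d W * Lp)ᵀ = lap G d W * Lp)
    (h4 : (Lp * lap G d W)ᵀ = Lp * lap G d W) :
    1 - lap G d W * Lp =
      Matrix.of fun p q : V × Fin d =>
        if p.2 = q.2 then (1 : ℝ) / (Fintype.card V) else 0 := by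
  classical
  have hne : Nonempty V := hT.isConnected.nonempty
  have hn : (Fintype.card V : ℝ) ≠ 0 := by
    exact_mod_cast Fintype.card_ne_zero
  set L := lap G d W with hL
  set P : Matrix (V × Fin d) (V × Fin d) ℝ := 1 - L * Lp with hP
  set Q : Matrix (V × Fin d) (V × Fin d) ℝ :=
    Matrix.of fun p q : V × Fin d =>
      if p.2 = q.2 then (1 : ℝ) / (Fintype.card V) else 0 with hQ
  have hQL : Q * L = 0 := by
    ext p q
    rw [Matrix.mul_apply, Matrix.zero_apply, Fintype.sum_prod_type]
    have : ∀ u : V, ∑ k : Fin d, Q p (u, k) * L (u, k) q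
        = (1 / (Fintype.card V : ℝ)) * L (u, p.2) q := by
      intro u
      simp only [hQ, Matrix.of_apply, ite_mul, zero_mul]
      rw [Finset.sum_ite_eq, if_pos (Finset.mem_univ p.2)]
    simp only [this, ← Finset.mul_sum]
    obtain ⟨w, j⟩ := q
    rw [lap_colsum G d W w p.2 j, mul_zero]
  have hQP : Q * P = Q := by
    rw [hP, mul_sub, mul_one, ← mul_assoc, hQL, zero_mul, sub_zero]
  have hPL : P * L = 0 := by
    rw [hP, sub_mul, one_mul, mul_assoc]
    rw [hL] at *
    rw [← mul_assoc, h1, sub_self]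
  have hPt : Pᵀ = P := by
    rw [hP, Matrix.transpose_sub, Matrix.transpose_one, hL, h3]
  have hW' : ∀ e ∈ G.edgeSet, IsUnit ((W e)ᵀ) := by
    intro e he
    rw [Matrix.isUnit_iff_isUnit_det, Matrix.det_transpose, ← Matrix.isUnit_iff_isUnit_det]
    exact hW e he
  have hLtP : lap G d (fun e => (W e)ᵀ) * P = 0 := by
    rw [← lap_transpose, ← hPt, ← Matrix.transpose_mul, ← hL, hPL, Matrix.transpose_zero]
  have hconst : ∀ (q : V × Fin d) (a b : V) (i : Fin d), P (a, i) q = P (b, i) q := by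
    intro q a b i
    refine lap_ker G hT d (fun e => (W e)ᵀ) hW' (fun p => P p q) ?_ a b i
    funext r
    have : (lap G d (fun e => (W e)ᵀ)).mulVec (fun p => P p q) r
        = (lap G d (fun e => (W e)ᵀ) * P) r q := by
      rw [Matrix.mul_apply, Matrix.mulVec, dotProduct]
    rw [this, hLtP]
    simp
  have hQP2 : Q * P = P := by
    ext p q
    rw [Matrix.mul_apply, Fintype.sum_prod_type]
    have e1 : ∀ u : V, ∑ k : Fin d, Q p (u, k) * P (u, k) q
        = (1 / (Fintype.card V : ℝ)) * P (u, p.2) q := by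
      intro u
      simp only [hQ, Matrix.of_apply, ite_mul, zero_mul]
      rw [Finset.sum_ite_eq, if_pos (Finset.mem_univ p.2)]
    have e2 : ∀ u : V, P (u, p.2) q = P (p.1, p.2) q := fun u => hconst q u p.1 p.2
    simp only [e1, e2, Finset.sum_const, Finset.card_univ, nsmul_eq_mul]
    rw [← mul_assoc, mul_one_div, div_self hn, one_mul]
  exact hQP2.symm.trans hQP
end

section
/- Let T be a tree on n vertices with nonsingular s×s matrix edge weights, L its Laplacian, L⁺ the Moore-Penrose inverse of L, and v a vertex. If (L⁺)_v denotes the principal submatrix of L⁺ obtained by deleting the row and column blocks of v, then (L⁺)_v = M L_v⁻¹ M, where M = I_{(n-1)s} - J_{n-1} ⊗ (1/n) I_s. -/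
open scoped Classical
open Matrix

section Aux

variable {V : Type*} [Fintype V] [DecidableEq V] (G : SimpleGraph V) (d : ℕ)
  (W : Sym2 V → Matrix (Fin d) (Fin d) ℝ)

lemma lap_apply_split (p : V × Fin d) (x : V) (j : Fin d) :
    lap G d W p (x, j) =
      (if p.1 = x then ∑ y ∈ G.neighborFinset p.1, (W (Sym2.mk p.1 y)) p.2 j else 0)
      + (if G.Adj p.1 x then -(W (Sym2.mk p.1 x)) p.2 j else 0) := by
  by_cases h : p.1 = x
  · have : ¬ G.Adj p.1 x := by rw [h]; exact G.irrefl
    simp [lap, h, this, Matrix.sum_apply]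
  · simp [lap, h]

lemma lap_rowsum (p : V × Fin d) (j : Fin d) : ∑ x : V, lap G d W p (x, j) = 0 := by
  simp only [lap_apply_split]
  rw [Finset.sum_add_distrib, Finset.sum_ite_eq, ← Finset.sum_filter,
    ← SimpleGraph.neighborFinset_eq_filter]
  simp [Finset.sum_neg_distrib]

lemma lap_colsum_s11 (i : Fin d) (q : V × Fin d) : ∑ x : V, lap G d W (x, i) q = 0 := by
  obtain ⟨q1, q2⟩ := q
  have h0 : ∀ x : V, lap G d W (x, i) (q1, q2) =
      (if q1 = x then ∑ y ∈ G.neighborFinset q1, (W (Sym2.mk q1 y)) i q2 else 0)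
      + (if G.Adj q1 x then -(W (Sym2.mk q1 x)) i q2 else 0) := by
    intro x
    by_cases h : x = q1
    · subst h
      simp [lap, G.irrefl, Matrix.sum_apply]
    · have h' : ¬ q1 = x := fun hh => h hh.symm
      by_cases ha : G.Adj x q1
      · have ha' : G.Adj q1 x := ha.symm
        have hsw : Sym2.mk x q1 = Sym2.mk q1 x := Sym2.eq_swap
        simp [lap, h, h', ha, ha', hsw]
      · have ha' : ¬ G.Adj q1 x := fun hh => ha hh.symm
        simp [lap, h, h', ha, ha']
  simp only [h0]
  rw [Finset.sum_add_distrib, Finset.sum_ite_eq, ← Finset.sum_filter,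
    ← SimpleGraph.neighborFinset_eq_filter]
  simp [Finset.sum_neg_distrib]

lemma lap_mulvec (Y : V → Fin d → ℝ) (u : V) (i : Fin d) :
    ∑ a : V × Fin d, lap G d W (u, i) a * Y a.1 a.2
      = ∑ x ∈ G.neighborFinset u, ∑ j, (W (Sym2.mk u x)) i j * (Y u j - Y x j) := by
  rw [Fintype.sum_prod_type]
  have h0 : ∀ x : V, (∑ j, lap G d W (u, i) (x, j) * Y x j)
      = (if u = x then ∑ y ∈ G.neighborFinset u, ∑ j, (W (Sym2.mk u y)) i j * Y u j else 0)
        + (if G.Adj u x then -∑ j, (W (Sym2.mk u x)) i j * Y x j else 0) := by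
    intro x
    by_cases h : u = x
    · subst h
      have e : ∀ j, lap G d W (u, i) (u, j)
          = ∑ y ∈ G.neighborFinset u, (W (Sym2.mk u y)) i j := by
        intro j; simp [lap, Matrix.sum_apply]
      simp only [e, if_pos rfl, if_neg G.irrefl, add_zero, Finset.sum_mul]
      exact Finset.sum_comm
    · have e : ∀ j, lap G d W (u, i) (x, j)
          = (if G.Adj u x then -(W (Sym2.mk u x)) i j else 0) := by
        intro j; simp [lap, h]
      by_cases ha : G.Adj u x
      · simp only [e, if_pos ha, if_neg h, zero_add, neg_mul]
        rw [← Finset.sum_neg_distrib]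
      · simp [e, ha, h]
  rw [Finset.sum_congr rfl (fun x _ => h0 x), Finset.sum_add_distrib, Finset.sum_ite_eq,
    if_pos (Finset.mem_univ u), ← Finset.sum_filter, ← SimpleGraph.neighborFinset_eq_filter,
    ← Finset.sum_add_distrib]
  refine Finset.sum_congr rfl fun x hx => ?_
  rw [← Finset.sum_neg_distrib, ← Finset.sum_add_distrib]
  refine Finset.sum_congr rfl fun j _ => ?_
  ring

lemma lap_ker_s11 (hT : G.IsTree) (hW : ∀ e ∈ G.edgeSet, IsUnit (W e)) (v : V)
    (Y : V → Fin d → ℝ) (hv : ∀ j, Y v j = 0)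
    (hbal : ∀ u, u ≠ v → ∀ i,
      ∑ a : V × Fin d, lap G d W (u, i) a * Y a.1 a.2 = 0) :
    ∀ x j, Y x j = 0 := by
  classical
  have hEU := hT.existsUnique_path
  let pa : ∀ x : V, G.Walk x v := fun x => (hEU x v).exists.choose
  have pa_path : ∀ x, (pa x).IsPath := fun x => (hEU x v).exists.choose_spec
  have pa_unique : ∀ {x : V} (q : G.Walk x v), q.IsPath → q = pa x := by
    intro x q hq
    exact ((hEU x v).unique hq (pa_path x))
  have pav : SimpleGraph.Walk.nil = pa v := pa_unique _ SimpleGraph.Walk.IsPath.nil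
  -- the antisymmetric pair function
  set F : Fin d → V → V → ℝ :=
    fun i x w => ∑ j, (W (Sym2.mk x w)) i j * (Y x j - Y w j) with hFdef
  have hF : ∀ i x w, F i x w = - F i w x := by
    intro i x w
    have hsw : Sym2.mk w x = Sym2.mk x w := Sym2.eq_swap
    rw [hFdef]
    simp only [hsw, ← Finset.sum_neg_distrib]
    exact Finset.sum_congr rfl fun j _ => by ring
  -- Step 1 : along the canonical path, Y is constant
  have step1 : ∀ (u p' : V) (hadj : G.Adj u p') (q : G.Walk p' v),
      pa u = SimpleGraph.Walk.cons hadj q → ∀ j, Y u j = Y p' j := by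
    intro u p' hadj q hdec
    have hu : u ≠ v := by
      intro he; subst he
      have := hdec ▸ pav.symm
      exact absurd (congrArg SimpleGraph.Walk.length this) (by simp)
    set S : Finset V := Finset.univ.filter (fun x => u ∈ (pa x).support) with hSdef
    have hmemS : ∀ x : V, x ∈ S ↔ u ∈ (pa x).support := by
      intro x; simp [hSdef]
    have hvS : v ∉ S := by
      rw [hmemS]
      rw [← pav]
      simp [hu]
    have huS : u ∈ S := (hmemS u).2 (SimpleGraph.Walk.start_mem_support _)
    have hqpa : q = pa p' := by
      refine pa_unique q ?_
      have := hdec ▸ pa_path u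
      exact this.of_cons
    have hpS : p' ∉ S := by
      rw [hmemS, ← hqpa]
      have := hdec ▸ pa_path u
      exact (SimpleGraph.Walk.cons_isPath_iff _ _).1 this |>.2
    have cross : ∀ x w, G.Adj x w → u ∈ (pa x).support → u ∉ (pa w).support →
        x = u ∧ w = p' := by
      intro x w hxw hux huw
      by_cases hx : x ∈ (pa w).support
      · exfalso
        have hdu : ((pa w).dropUntil x hx).IsPath := (pa_path w).dropUntil hx
        have heq : (pa w).dropUntil x hx = pa x := pa_unique _ hdu
        have hsub := SimpleGraph.Walk.support_dropUntil_subset (pa w) hx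
        exact huw (hsub (heq ▸ hux))
      · have hc : (SimpleGraph.Walk.cons hxw (pa w)).IsPath := (pa_path w).cons hx
        have he : SimpleGraph.Walk.cons hxw (pa w) = pa x := pa_unique _ hc
        have hxu : x = u := by
          have hm : u ∈ (SimpleGraph.Walk.cons hxw (pa w)).support := he ▸ hux
          rw [SimpleGraph.Walk.support_cons] at hm
          rcases List.mem_cons.1 hm with h | h
          · exact h.symm
          · exact absurd h huw
        subst hxu
        refine ⟨rfl, ?_⟩
        have hs : (SimpleGraph.Walk.cons hxw (pa w)).support
            = (SimpleGraph.Walk.cons hadj q).support := by rw [he, ← hdec]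
        rw [SimpleGraph.Walk.support_cons, SimpleGraph.Walk.support_cons,
          (pa w).support_eq_cons, q.support_eq_cons] at hs
        simp only [List.cons.injEq] at hs
        exact hs.2.1
    -- the pair sum
    have pairsum : ∀ i : Fin d,
        (∑ x ∈ S, ∑ w ∈ G.neighborFinset x, F i x w) = F i u p' := by
      intro i
      have e1 : ∀ x : V, (∑ w ∈ G.neighborFinset x, F i x w)
          = ∑ w : V, if G.Adj x w then F i x w else 0 := by
        intro x
        rw [← Finset.sum_filter, ← SimpleGraph.neighborFinset_eq_filter]
      have hprod : ∑ z ∈ (S ×ˢ Finset.univ).filter (fun z => G.Adj z.1 z.2), F i z.1 z.2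
          = ∑ x ∈ S, ∑ w ∈ G.neighborFinset x, F i x w := by
        rw [Finset.sum_filter, Finset.sum_product]
        exact Finset.sum_congr rfl fun x _ => (e1 x).symm
      calc ∑ x ∈ S, ∑ w ∈ G.neighborFinset x, F i x w
          = ∑ z ∈ (S ×ˢ Finset.univ).filter (fun z => G.Adj z.1 z.2), F i z.1 z.2 :=
            hprod.symm
        _ = (∑ z ∈ ((S ×ˢ Finset.univ).filter (fun z => G.Adj z.1 z.2)).filter
                (fun z => z.2 ∈ S), F i z.1 z.2)
            + ∑ z ∈ ((S ×ˢ Finset.univ).filter (fun z => G.Adj z.1 z.2)).filter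
                (fun z => ¬ z.2 ∈ S), F i z.1 z.2 :=
            (Finset.sum_filter_add_sum_filter_not _ _ _).symm
        _ = F i u p' := by
            have hT1 : (∑ z ∈ ((S ×ˢ Finset.univ).filter (fun z => G.Adj z.1 z.2)).filter
                (fun z => z.2 ∈ S), F i z.1 z.2) = 0 := by
              refine Finset.sum_involution (fun z _ => Prod.swap z) ?_ ?_ ?_ ?_
              · intro z hz
                show F i z.1 z.2 + F i z.2 z.1 = 0
                rw [hF i z.1 z.2]; ring
              · intro z hz hnz
                intro hsw
                apply hnz
                have : z.2 = z.1 := congrArg Prod.fst hsw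
                rw [hFdef]
                simp [← this]
              · intro z hz
                simp only [Finset.mem_filter, Finset.mem_product] at hz ⊢
                exact ⟨⟨⟨hz.2, Finset.mem_univ _⟩, hz.1.2.symm⟩, hz.1.1.1⟩
              · intro z hz
                rfl
            have hT2 : (((S ×ˢ Finset.univ).filter (fun z => G.Adj z.1 z.2)).filter
                (fun z => ¬ z.2 ∈ S)) = {(u, p')} := by
              ext z
              simp only [Finset.mem_filter, Finset.mem_product, Finset.mem_singleton,
                Finset.mem_univ, and_true, true_and]
              constructor
              · rintro ⟨⟨hz1, hadjz⟩, hz2⟩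
                have := cross z.1 z.2 hadjz ((hmemS z.1).1 hz1) (fun hh => hz2 ((hmemS z.2).2 hh))
                exact Prod.ext this.1 this.2
              · rintro rfl
                exact ⟨⟨huS, hadj⟩, hpS⟩
            rw [hT1, hT2, zero_add, Finset.sum_singleton]
    -- conclude W (u,p') *ᵥ (Y u - Y p') = 0
    have hz : ∀ i, F i u p' = 0 := by
      intro i
      rw [← pairsum i]
      refine Finset.sum_eq_zero fun x hxS => ?_
      have hxv : x ≠ v := fun he => hvS (he ▸ hxS)
      calc ∑ w ∈ G.neighborFinset x, F i x w
          = ∑ a : V × Fin d, lap G d W (x, i) a * Y a.1 a.2 := (lap_mulvec G d W Y x i).symm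
        _ = 0 := hbal x hxv i
    have hWe : IsUnit (W (Sym2.mk u p')) := hW _ (G.mem_edgeSet.2 hadj)
    have hmv : (W (Sym2.mk u p')) *ᵥ (fun j => Y u j - Y p' j) = 0 := by
      funext i
      simp only [Pi.zero_apply, Matrix.mulVec, dotProduct]
      exact hz i
    intro j
    have hinj : (fun j => Y u j - Y p' j) = 0 := by
      have h1 : (↑hWe.unit⁻¹ : Matrix (Fin d) (Fin d) ℝ) *ᵥ
          ((W (Sym2.mk u p')) *ᵥ (fun j => Y u j - Y p' j)) = 0 := by
        rw [hmv, Matrix.mulVec_zero]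
      rwa [Matrix.mulVec_mulVec, IsUnit.val_inv_mul, Matrix.one_mulVec] at h1
    have := congrFun hinj j
    simpa [sub_eq_zero] using this
  -- Step 2 : induction on path length
  have main : ∀ (k : ℕ) (x : V), (pa x).length ≤ k → ∀ j, Y x j = 0 := by
    intro k
    induction k with
    | zero =>
      intro x hx j
      by_cases hxv : x = v
      · subst hxv; exact hv j
      · exfalso
        have h1 : ¬ (pa x).Nil := SimpleGraph.Walk.not_nil_of_ne hxv
        exact h1 (SimpleGraph.Walk.nil_iff_length_eq.2 (Nat.le_zero.mp hx))
    | succ k ih =>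
      intro x hx j
      by_cases hxv : x = v
      · subst hxv; exact hv j
      · obtain ⟨p', hadj, q, hdec⟩ :=
          (SimpleGraph.Walk.not_nil_iff).1 (SimpleGraph.Walk.not_nil_of_ne hxv)
        have hYx := step1 x p' hadj q hdec
        have hqpa : q = pa p' := by
          refine pa_unique q ?_
          have := hdec ▸ pa_path x
          exact this.of_cons
        have hlen : (pa p').length ≤ k := by
          have h2 : (pa x).length = q.length + 1 := by
            rw [hdec]; simp
          rw [← hqpa]
          omega
        rw [hYx j]
        exact ih p' hlen j
  exact fun x j => main (pa x).length x le_rfl j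

end Aux

private def embm {V : Type*} (v : V) (d : ℕ) : {x : V // x ≠ v} × Fin d → V × Fin d :=
  fun p => (p.1.1, p.2)

section Main

variable {V : Type*} [Fintype V] [DecidableEq V] (G : SimpleGraph V) (d : ℕ)
  (W : Sym2 V → Matrix (Fin d) (Fin d) ℝ) (v : V)

/-- `J_n ⊗ I_d` on the full index set. -/
private noncomputable def Km : Matrix (V × Fin d) (V × Fin d) ℝ :=
  Matrix.of fun p q => if p.2 = q.2 then 1 else 0

private noncomputable def Am : Matrix (V × Fin d) (V × Fin d) ℝ :=
  Matrix.of fun p q => if p.1 = v ∧ p.2 = q.2 then 1 else 0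

private noncomputable def Bm : Matrix (V × Fin d) (V × Fin d) ℝ :=
  Matrix.of fun p q => if q.1 = v ∧ p.2 = q.2 then 1 else 0

private noncomputable def Nm : Matrix (V × Fin d) (V × Fin d) ℝ :=
  Matrix.of fun p q =>
    if h : p.1 ≠ v ∧ q.1 ≠ v
    then ((lap G d W).submatrix (embm v d) (embm v d))⁻¹
      ((⟨p.1, h.1⟩, p.2) : {x : V // x ≠ v} × Fin d) ((⟨q.1, h.2⟩, q.2) : {x : V // x ≠ v} × Fin d)
    else 0

variable {v}

private lemma sum_emb (f : V × Fin d → ℝ) (hf : ∀ k, f (v, k) = 0) :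
    ∑ a : V × Fin d, f a = ∑ a : {x : V // x ≠ v} × Fin d, f (embm v d a) := by
  classical
  rw [Fintype.sum_prod_type, Fintype.sum_prod_type]
  have h1 : ∑ x : V, ∑ k, f (x, k) = ∑ x ∈ Finset.univ.erase v, ∑ k, f (x, k) :=
    (Finset.sum_erase _ (by simp [hf])).symm
  rw [h1, Finset.sum_subtype (p := fun x => x ≠ v) (Finset.univ.erase v)
    (fun x => by simp [Finset.mem_erase]) (fun x => ∑ k, f (x, k))]
  rfl

private lemma Km_mul_Km : Km (V := V) d * Km d = (Fintype.card V : ℝ) • Km d := by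
  ext p q
  rw [Matrix.mul_apply, Fintype.sum_prod_type]
  simp [Km, Finset.sum_ite_eq, Finset.sum_ite_eq', mul_ite, ite_mul, Finset.card_univ]
  split_ifs <;> simp [Finset.card_univ]

private lemma Km_transpose : (Km (V := V) d)ᵀ = Km d := by
  ext p q
  simp [Km, Matrix.transpose_apply, eq_comm]

private lemma lap_mul_Km : lap G d W * Km d = 0 := by
  ext p q
  rw [Matrix.mul_apply, Fintype.sum_prod_type]
  have h0 : ∀ x : V, ∑ k, lap G d W p (x, k) * Km d (x, k) q = lap G d W p (x, q.2) := by
    intro x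
    simp [Km, mul_ite, Finset.sum_ite_eq']
  rw [Finset.sum_congr rfl fun x _ => h0 x, lap_rowsum]
  rfl

private lemma Km_mul_lap : Km d * lap G d W = 0 := by
  ext p q
  rw [Matrix.mul_apply, Fintype.sum_prod_type]
  have h0 : ∀ x : V, ∑ k, Km d (p) (x, k) * lap G d W (x, k) q = lap G d W (x, p.2) q := by
    intro x
    simp [Km, ite_mul, Finset.sum_ite_eq]
  rw [Finset.sum_congr rfl fun x _ => h0 x, lap_colsum_s11]
  rfl

private lemma Am_mul_Km : Am d v * Km d = (Fintype.card V : ℝ) • Am d v := by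
  ext p q
  rw [Matrix.mul_apply, Fintype.sum_prod_type]
  simp [Am, Km, ite_mul, mul_ite, Finset.sum_ite_eq', Finset.card_univ, ite_and]
  split_ifs <;> simp [Finset.card_univ]

private lemma Km_mul_Bm : Km d * Bm d v = (Fintype.card V : ℝ) • Bm d v := by
  ext p q
  rw [Matrix.mul_apply, Fintype.sum_prod_type]
  simp [Bm, Km, ite_mul, mul_ite, Finset.sum_ite_eq', Finset.card_univ, ite_and]
  split_ifs <;> simp [Finset.card_univ]

private lemma mp_unique {ι : Type*} [Fintype ι] [DecidableEq ι]
    (L B C : Matrix ι ι ℝ)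
    (hB1 : L * B * L = L) (hB2 : B * L * B = B)
    (hB3 : (L * B)ᵀ = L * B) (hB4 : (B * L)ᵀ = B * L)
    (hC1 : L * C * L = L) (hC2 : C * L * C = C)
    (hC3 : (L * C)ᵀ = L * C) (hC4 : (C * L)ᵀ = C * L) : B = C := by
  have e1 : L * B = L * C := by
    calc L * B = (L * B)ᵀ := hB3.symm
      _ = Bᵀ * Lᵀ := Matrix.transpose_mul _ _
      _ = Bᵀ * (L * C * L)ᵀ := by rw [hC1]
      _ = Bᵀ * (Lᵀ * (L * C)ᵀ) := by rw [Matrix.transpose_mul (L * C) L]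
      _ = (Bᵀ * Lᵀ) * (L * C)ᵀ := (Matrix.mul_assoc _ _ _).symm
      _ = (L * B)ᵀ * (L * C) := by rw [hC3, Matrix.transpose_mul]
      _ = (L * B) * (L * C) := by rw [hB3]
      _ = (L * B * L) * C := (Matrix.mul_assoc _ _ _).symm
      _ = L * C := by rw [hB1]
  have e2 : B * L = C * L := by
    have hL : L * (C * L) = L := by rw [← Matrix.mul_assoc, hC1]
    calc B * L = (B * L)ᵀ := hB4.symm
      _ = Lᵀ * Bᵀ := Matrix.transpose_mul _ _
      _ = (L * (C * L))ᵀ * Bᵀ := by rw [hL]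
      _ = ((C * L)ᵀ * Lᵀ) * Bᵀ := by rw [Matrix.transpose_mul]
      _ = (C * L) * (Lᵀ * Bᵀ) := by rw [hC4, Matrix.mul_assoc]
      _ = (C * L) * (B * L)ᵀ := by rw [Matrix.transpose_mul]
      _ = (C * L) * (B * L) := by rw [hB4]
      _ = C * (L * B * L) := by
          rw [Matrix.mul_assoc C L (B * L), ← Matrix.mul_assoc L B L]
      _ = C * L := by rw [hB1]
  calc B = B * L * B := hB2.symm
    _ = C * L * B := by rw [e2]
    _ = C * (L * B) := Matrix.mul_assoc _ _ _
    _ = C * (L * C) := by rw [e1]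
    _ = C * L * C := (Matrix.mul_assoc _ _ _).symm
    _ = C := hC2

private lemma lv_isUnit (hT : G.IsTree) (hW : ∀ e ∈ G.edgeSet, IsUnit (W e)) :
    IsUnit ((lap G d W).submatrix (embm v d) (embm v d)).det := by
  classical
  rw [isUnit_iff_ne_zero]
  intro hdet
  obtain ⟨z, hz0, hz⟩ := Matrix.exists_mulVec_eq_zero_iff.2 hdet
  apply hz0
  set Y : V → Fin d → ℝ := fun x j => if hx : x = v then 0 else z (⟨x, hx⟩, j) with hYdef
  have hv : ∀ j, Y v j = 0 := fun j => by simp [hYdef]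
  have hYe : ∀ (a : {x : V // x ≠ v} × Fin d), Y a.1.1 a.2 = z a := by
    rintro ⟨⟨x, hx⟩, j⟩
    simp [hYdef, hx]
  have hbal : ∀ u, u ≠ v → ∀ i,
      ∑ a : V × Fin d, lap G d W (u, i) a * Y a.1 a.2 = 0 := by
    intro u hu i
    have h1 : ∑ a : V × Fin d, lap G d W (u, i) a * Y a.1 a.2
        = ((lap G d W).submatrix (embm v d) (embm v d)).mulVec z ((⟨u, hu⟩, i)) := by
      rw [sum_emb d (fun a => lap G d W (u, i) a * Y a.1 a.2)
        (fun k => by show lap G d W (u, i) (v, k) * Y v k = 0; rw [hv k, mul_zero])]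
      rw [Matrix.mulVec, dotProduct]
      refine Finset.sum_congr rfl fun a _ => ?_
      have hY2 : Y (embm v d a).1 (embm v d a).2 = z a := hYe a
      rw [hY2]
      rfl
    rw [h1, hz]
    rfl
  have hker := lap_ker_s11 G d W hT hW v Y hv hbal
  funext a
  rw [← hYe a, hker]
  rfl

private lemma lap_mul_Nm (hd : IsUnit ((lap G d W).submatrix (embm v d) (embm v d)).det) :
    lap G d W * Nm G d W v = 1 - Am d v := by
  classical
  have hinv : (lap G d W).submatrix (embm v d) (embm v d)
      * ((lap G d W).submatrix (embm v d) (embm v d))⁻¹ = 1 :=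
    Matrix.mul_nonsing_inv _ hd
  ext p q
  rw [Matrix.mul_apply]
  by_cases hq : q.1 = v
  · have hz : ∀ a, Nm G d W v a q = 0 := by
      intro a; simp [Nm, hq]
    rw [Finset.sum_congr rfl fun a _ => by rw [hz a, mul_zero]]
    rw [Finset.sum_const_zero]
    by_cases hp : p.1 = v
    · have hpq : p = q ↔ p.2 = q.2 := by
        constructor
        · intro h; rw [h]
        · intro h; exact Prod.ext (by rw [hp, hq]) h
      simp [Am, Matrix.one_apply, hp, hpq]
    · have hpq : ¬ p = q := fun h => hp (h ▸ hq)
      simp [Am, Matrix.one_apply, hp, hpq]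
  · set q' : {x : V // x ≠ v} × Fin d := (⟨q.1, hq⟩, q.2) with hq'def
    have hNe : ∀ a : {x : V // x ≠ v} × Fin d,
        Nm G d W v (embm v d a) q
          = ((lap G d W).submatrix (embm v d) (embm v d))⁻¹ a q' := by
      rintro ⟨⟨x, hx⟩, k⟩
      simp only [Nm, embm, Matrix.of_apply]
      rw [dif_pos ⟨hx, hq⟩]
    have hsum : ∑ a, lap G d W p a * Nm G d W v a q
        = ∑ a : {x : V // x ≠ v} × Fin d,
            lap G d W p (embm v d a)
              * ((lap G d W).submatrix (embm v d) (embm v d))⁻¹ a q' := by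
      rw [sum_emb d (fun a => lap G d W p a * Nm G d W v a q)
        (fun k => by show lap G d W p (v, k) * Nm G d W v (v, k) q = 0; simp [Nm])]
      exact Finset.sum_congr rfl fun a _ => by rw [hNe a]
    rw [hsum]
    by_cases hp : p.1 = v
    · have hrow : ∀ b : V × Fin d, lap G d W p b
          = -∑ u : {x : V // x ≠ v}, lap G d W (u.1, p.2) b := by
        intro b
        have h0 := lap_colsum_s11 G d W p.2 b
        have h1 : ∑ x : V, lap G d W (x, p.2) b
            = lap G d W (v, p.2) b + ∑ x ∈ Finset.univ.erase v, lap G d W (x, p.2) b :=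
          (Finset.add_sum_erase _ _ (Finset.mem_univ v)).symm
        have h2 : ∑ x ∈ Finset.univ.erase v, lap G d W (x, p.2) b
            = ∑ u : {x : V // x ≠ v}, lap G d W (u.1, p.2) b :=
          Finset.sum_subtype (p := fun x => x ≠ v) (Finset.univ.erase v)
            (fun x => by simp [Finset.mem_erase]) (fun x => lap G d W (x, p.2) b)
        have hpv : p = (v, p.2) := Prod.ext hp rfl
        rw [← hpv] at h1
        rw [h1, h2] at h0
        linarith [h0]
      have hpq : ¬ p = q := fun h => hq (h ▸ hp)
      calc ∑ a : {x : V // x ≠ v} × Fin d,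
            lap G d W p (embm v d a)
              * ((lap G d W).submatrix (embm v d) (embm v d))⁻¹ a q'
          = ∑ a : {x : V // x ≠ v} × Fin d,
              -(∑ u : {x : V // x ≠ v}, lap G d W (u.1, p.2) (embm v d a)
                * ((lap G d W).submatrix (embm v d) (embm v d))⁻¹ a q') := by
            refine Finset.sum_congr rfl fun a _ => ?_
            rw [hrow (embm v d a), neg_mul, Finset.sum_mul]
        _ = -∑ a : {x : V // x ≠ v} × Fin d,
              ∑ u : {x : V // x ≠ v}, lap G d W (u.1, p.2) (embm v d a)
                * ((lap G d W).submatrix (embm v d) (embm v d))⁻¹ a q' :=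
            Finset.sum_neg_distrib _
        _ = -∑ u : {x : V // x ≠ v},
              ∑ a : {x : V // x ≠ v} × Fin d, lap G d W (u.1, p.2) (embm v d a)
                * ((lap G d W).submatrix (embm v d) (embm v d))⁻¹ a q' := by
            rw [Finset.sum_comm]
        _ = -∑ u : {x : V // x ≠ v},
              (1 : Matrix ({x : V // x ≠ v} × Fin d) ({x : V // x ≠ v} × Fin d) ℝ)
                ((u, p.2)) q' := by
            congr 1
            refine Finset.sum_congr rfl fun u _ => ?_
            rw [← hinv, Matrix.mul_apply]
            rfl
        _ = (1 - Am d v) p q := by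
            simp only [Matrix.one_apply, Am, Matrix.sub_apply, hp, hpq, hq'def,
              Prod.ext_iff, ite_and, Matrix.of_apply, if_false, if_true, eq_self_iff_true,
              true_and]
            have hco : ∀ x : {x : V // x ≠ v}, ((x : V) = q.1) ↔ x = ⟨q.1, hq⟩ :=
              fun x => ⟨fun h => Subtype.ext h, fun h => by rw [h]⟩
            simp only [hco, Finset.sum_ite_eq, Finset.sum_ite_eq', Finset.mem_univ, if_true]
            ring
    · have hval : ∑ a : {x : V // x ≠ v} × Fin d,
            lap G d W p (embm v d a)
              * ((lap G d W).submatrix (embm v d) (embm v d))⁻¹ a q'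
          = ((lap G d W).submatrix (embm v d) (embm v d)
              * ((lap G d W).submatrix (embm v d) (embm v d))⁻¹) ((⟨p.1, hp⟩, p.2)) q' := by
        rw [Matrix.mul_apply]
        rfl
      rw [hval, hinv]
      have hppqq : ((⟨p.1, hp⟩, p.2) : {x : V // x ≠ v} × Fin d) = q' ↔ p = q := by
        rw [hq'def, Prod.ext_iff, Prod.ext_iff, Subtype.ext_iff]
      simp [Matrix.one_apply, Am, Matrix.sub_apply, hp, hppqq]

private lemma Nm_mul_lap (hd : IsUnit ((lap G d W).submatrix (embm v d) (embm v d)).det) :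
    Nm G d W v * lap G d W = 1 - Bm d v := by
  classical
  have hinv : ((lap G d W).submatrix (embm v d) (embm v d))⁻¹
      * (lap G d W).submatrix (embm v d) (embm v d) = 1 :=
    Matrix.nonsing_inv_mul _ hd
  ext p q
  rw [Matrix.mul_apply]
  by_cases hp : p.1 = v
  · have hz : ∀ a, Nm G d W v p a = 0 := by
      intro a; simp [Nm, hp]
    rw [Finset.sum_congr rfl fun a _ => by rw [hz a, zero_mul]]
    rw [Finset.sum_const_zero]
    by_cases hq : q.1 = v
    · have hpq : p = q ↔ p.2 = q.2 := by
        constructor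
        · intro h; rw [h]
        · intro h; exact Prod.ext (by rw [hp, hq]) h
      simp [Bm, Matrix.one_apply, hq, hpq]
    · have hpq : ¬ p = q := fun h => hq (h ▸ hp)
      simp [Bm, Matrix.one_apply, hq, hpq]
  · set p' : {x : V // x ≠ v} × Fin d := (⟨p.1, hp⟩, p.2) with hp'def
    have hNe : ∀ a : {x : V // x ≠ v} × Fin d,
        Nm G d W v p (embm v d a)
          = ((lap G d W).submatrix (embm v d) (embm v d))⁻¹ p' a := by
      rintro ⟨⟨x, hx⟩, k⟩
      simp only [Nm, embm, Matrix.of_apply]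
      rw [dif_pos ⟨hp, hx⟩]
    have hsum : ∑ a, Nm G d W v p a * lap G d W a q
        = ∑ a : {x : V // x ≠ v} × Fin d,
            ((lap G d W).submatrix (embm v d) (embm v d))⁻¹ p' a
              * lap G d W (embm v d a) q := by
      rw [sum_emb d (fun a => Nm G d W v p a * lap G d W a q)
        (fun k => by show Nm G d W v p (v, k) * lap G d W (v, k) q = 0; simp [Nm])]
      exact Finset.sum_congr rfl fun a _ => by rw [hNe a]
    rw [hsum]
    by_cases hq : q.1 = v
    · have hcol : ∀ b : V × Fin d, lap G d W b q
          = -∑ u : {x : V // x ≠ v}, lap G d W b (u.1, q.2) := by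
        intro b
        have h0 := lap_rowsum G d W b q.2
        have h1 : ∑ x : V, lap G d W b (x, q.2)
            = lap G d W b (v, q.2) + ∑ x ∈ Finset.univ.erase v, lap G d W b (x, q.2) :=
          (Finset.add_sum_erase _ _ (Finset.mem_univ v)).symm
        have h2 : ∑ x ∈ Finset.univ.erase v, lap G d W b (x, q.2)
            = ∑ u : {x : V // x ≠ v}, lap G d W b (u.1, q.2) :=
          Finset.sum_subtype (p := fun x => x ≠ v) (Finset.univ.erase v)
            (fun x => by simp [Finset.mem_erase]) (fun x => lap G d W b (x, q.2))
        have hqv : q = (v, q.2) := Prod.ext hq rfl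
        rw [← hqv] at h1
        rw [h1, h2] at h0
        linarith [h0]
      have hpq : ¬ p = q := fun h => hp (h ▸ hq)
      calc ∑ a : {x : V // x ≠ v} × Fin d,
            ((lap G d W).submatrix (embm v d) (embm v d))⁻¹ p' a
              * lap G d W (embm v d a) q
          = ∑ a : {x : V // x ≠ v} × Fin d,
              -(∑ u : {x : V // x ≠ v},
                ((lap G d W).submatrix (embm v d) (embm v d))⁻¹ p' a
                  * lap G d W (embm v d a) (u.1, q.2)) := by
            refine Finset.sum_congr rfl fun a _ => ?_
            rw [hcol (embm v d a), mul_neg, Finset.mul_sum]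
        _ = -∑ a : {x : V // x ≠ v} × Fin d,
              ∑ u : {x : V // x ≠ v},
                ((lap G d W).submatrix (embm v d) (embm v d))⁻¹ p' a
                  * lap G d W (embm v d a) (u.1, q.2) :=
            Finset.sum_neg_distrib _
        _ = -∑ u : {x : V // x ≠ v},
              ∑ a : {x : V // x ≠ v} × Fin d,
                ((lap G d W).submatrix (embm v d) (embm v d))⁻¹ p' a
                  * lap G d W (embm v d a) (u.1, q.2) := by
            rw [Finset.sum_comm]
        _ = -∑ u : {x : V // x ≠ v},
              (1 : Matrix ({x : V // x ≠ v} × Fin d) ({x : V // x ≠ v} × Fin d) ℝ)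
                p' ((u, q.2)) := by
            congr 1
            refine Finset.sum_congr rfl fun u _ => ?_
            rw [← hinv, Matrix.mul_apply]
            rfl
        _ = (1 - Bm d v) p q := by
            simp only [Matrix.one_apply, Bm, Matrix.sub_apply, hq, hpq, hp'def,
              Prod.ext_iff, ite_and, Matrix.of_apply, if_false, if_true, eq_self_iff_true,
              true_and]
            have hco : ∀ x : {x : V // x ≠ v}, (p.1 = (x : V)) ↔ x = ⟨p.1, hp⟩ :=
              fun x => ⟨fun h => Subtype.ext h.symm, fun h => by rw [h]⟩
            simp only [hco, Finset.sum_ite_eq, Finset.sum_ite_eq', Finset.mem_univ, if_true]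
            ring
    · set q' : {x : V // x ≠ v} × Fin d := (⟨q.1, hq⟩, q.2) with hq'def
      have hval : ∑ a : {x : V // x ≠ v} × Fin d,
            ((lap G d W).submatrix (embm v d) (embm v d))⁻¹ p' a
              * lap G d W (embm v d a) q
          = (((lap G d W).submatrix (embm v d) (embm v d))⁻¹
              * (lap G d W).submatrix (embm v d) (embm v d)) p' q' := by
        rw [Matrix.mul_apply]
        rfl
      rw [hval, hinv]
      have hppqq : p' = q' ↔ p = q := by
        rw [hp'def, hq'def, Prod.ext_iff, Prod.ext_iff, Subtype.ext_iff]
      simp [Matrix.one_apply, Bm, Matrix.sub_apply, hq, hppqq]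

end Main

/-- For a tree with nonsingular matrix edge weights, Laplacian `L` with Moore–Penrose
inverse `L⁺`, and a vertex `v`: the principal submatrix of `L⁺` with the blocks of `v`
deleted equals `M L_v⁻¹ M` where `M = I - J_{n-1} ⊗ (1/n) I_d`. -/
theorem pinv_principal_submatrix {V : Type*} [Fintype V] [DecidableEq V]
    (G : SimpleGraph V) (hT : G.IsTree) (d : ℕ)
    (W : Sym2 V → Matrix (Fin d) (Fin d) ℝ)
    (hW : ∀ e ∈ G.edgeSet, IsUnit (W e))
    (Lp : Matrix (V × Fin d) (V × Fin d) ℝ)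
    (h1 : lap G d W * Lp * lap G d W = lap G d W)
    (h2 : Lp * lap G d W * Lp = Lp)
    (h3 : (lap G d W * Lp)ᵀ = lap G d W * Lp)
    (h4 : (Lp * lap G d W)ᵀ = Lp * lap G d W)
    (v : V) :
    letI emb : {x : V // x ≠ v} × Fin d → V × Fin d := fun p => ((p.1 : V), p.2)
    letI Lv := (lap G d W).submatrix emb emb
    letI M : Matrix ({x : V // x ≠ v} × Fin d) ({x : V // x ≠ v} × Fin d) ℝ :=
      1 - Matrix.of (fun p q : {x : V // x ≠ v} × Fin d =>
        if p.2 = q.2 then (1 : ℝ) / (Fintype.card V) else 0)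
    Lp.submatrix emb emb = M * Lv⁻¹ * M := by
  classical
  have hn : (Fintype.card V : ℝ) ≠ 0 := by
    have : 0 < Fintype.card V := Fintype.card_pos_iff.2 ⟨v⟩
    exact_mod_cast this.ne'
  have hd : IsUnit ((lap G d W).submatrix (embm v d) (embm v d)).det :=
    lv_isUnit G d W hT hW
  show Lp.submatrix (embm v d) (embm v d)
      = (1 - Matrix.of (fun p q : {x : V // x ≠ v} × Fin d =>
          if p.2 = q.2 then (1 : ℝ) / (Fintype.card V) else 0))
        * ((lap G d W).submatrix (embm v d) (embm v d))⁻¹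
        * (1 - Matrix.of (fun p q : {x : V // x ≠ v} × Fin d =>
          if p.2 = q.2 then (1 : ℝ) / (Fintype.card V) else 0))
  set L := lap G d W with hLdef
  set Nn := Nm G d W v with hNn
  set K := Km (V := V) d with hKdef
  set P : Matrix (V × Fin d) (V × Fin d) ℝ
    := 1 - (Fintype.card V : ℝ)⁻¹ • K with hP
  set Mst : Matrix ({x : V // x ≠ v} × Fin d) ({x : V // x ≠ v} × Fin d) ℝ
    := 1 - Matrix.of (fun p q : {x : V // x ≠ v} × Fin d =>
        if p.2 = q.2 then (1 : ℝ) / (Fintype.card V) else 0) with hMst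
  have hKK : K * K = (Fintype.card V : ℝ) • K := Km_mul_Km d
  have hKT : Kᵀ = K := Km_transpose d
  have hLK : L * K = 0 := lap_mul_Km G d W
  have hKL : K * L = 0 := Km_mul_lap G d W
  have hAK : Am d v * K = (Fintype.card V : ℝ) • Am d v := Am_mul_Km d
  have hKB : K * Bm d v = (Fintype.card V : ℝ) • Bm d v := Km_mul_Bm d
  have hLN : L * Nn = 1 - Am d v := lap_mul_Nm G d W hd
  have hNL : Nn * L = 1 - Bm d v := Nm_mul_lap G d W hd
  have hsmul : ((Fintype.card V : ℝ)⁻¹ • K) * ((Fintype.card V : ℝ)⁻¹ • K)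
      = (Fintype.card V : ℝ)⁻¹ • K := by
    rw [Matrix.smul_mul, Matrix.mul_smul, hKK, smul_smul, smul_smul]
    congr 1
    field_simp
  have hPP : P * P = P := by
    rw [hP, sub_mul, one_mul, mul_sub, mul_one, hsmul]
    abel
  have hPT : Pᵀ = P := by
    rw [hP, Matrix.transpose_sub, Matrix.transpose_one, Matrix.transpose_smul, hKT]
  have hLP : L * P = L := by
    rw [hP, mul_sub, mul_one, Matrix.mul_smul, hLK, smul_zero, sub_zero]
  have hPL : P * L = L := by
    rw [hP, sub_mul, one_mul, Matrix.smul_mul, hKL, smul_zero, sub_zero]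
  have hAP : Am d v * P = 0 := by
    rw [hP, mul_sub, mul_one, Matrix.mul_smul, hAK, smul_smul,
      inv_mul_cancel₀ hn, one_smul, sub_self]
  have hPB : P * Bm d v = 0 := by
    rw [hP, sub_mul, one_mul, Matrix.smul_mul, hKB, smul_smul,
      inv_mul_cancel₀ hn, one_smul, sub_self]
  set X := P * Nn * P with hX
  have hLX : L * X = P := by
    rw [hX, ← Matrix.mul_assoc, ← Matrix.mul_assoc, hLP, hLN, sub_mul, one_mul, hAP, sub_zero]
  have hXL : X * L = P := by
    rw [hX, Matrix.mul_assoc, hPL, Matrix.mul_assoc, hNL, mul_sub, mul_one, hPB, sub_zero]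
  have hc1 : L * X * L = L := by rw [hLX, hPL]
  have hc2 : X * L * X = X := by
    rw [hXL, hX, ← Matrix.mul_assoc, ← Matrix.mul_assoc, hPP]
  have hc3 : (L * X)ᵀ = L * X := by rw [hLX, hPT]
  have hc4 : (X * L)ᵀ = X * L := by rw [hXL, hPT]
  have hLpX : Lp = X := mp_unique L Lp X h1 h2 h3 h4 hc1 hc2 hc3 hc4
  -- entries of `Nn`
  have hNcol : ∀ (b : V × Fin d) (k : Fin d), Nn b (v, k) = 0 := by
    intro b k; simp [hNn, Nm]
  have hNrow : ∀ (b : V × Fin d) (k : Fin d), Nn (v, k) b = 0 := by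
    intro b k; simp [hNn, Nm]
  have hNemb : ∀ (b' a' : {x : V // x ≠ v} × Fin d),
      Nn (embm v d b') (embm v d a')
        = (((lap G d W).submatrix (embm v d) (embm v d))⁻¹) b' a' := by
    rintro ⟨⟨x, hx⟩, k⟩ ⟨⟨y, hy⟩, l⟩
    simp only [hNn, Nm, embm, Matrix.of_apply]
    rw [dif_pos ⟨hx, hy⟩]
  -- `Mst` is the principal submatrix of `P`
  have hMP : ∀ p q : {x : V // x ≠ v} × Fin d,
      Mst p q = P (embm v d p) (embm v d q) := by
    intro p q
    have hemb : (embm v d p = embm v d q) ↔ p = q := by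
      obtain ⟨⟨x, hx⟩, k⟩ := p
      obtain ⟨⟨y, hy⟩, l⟩ := q
      constructor
      · intro h
        simp only [embm, Prod.mk.injEq] at h
        exact Prod.ext (Subtype.ext h.1) h.2
      · intro h; rw [h]
    rw [hMst, hP]
    simp only [Matrix.sub_apply, Matrix.smul_apply, Matrix.one_apply, Matrix.of_apply,
      hKdef, Km, hemb, smul_eq_mul, mul_ite, mul_one, mul_zero, one_div]
    rfl
  have hPNzero : ∀ (r : V × Fin d) (k : Fin d), (P * Nn) r (v, k) = 0 := by
    intro r k
    rw [Matrix.mul_apply]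
    exact Finset.sum_eq_zero fun b _ => by rw [hNcol b k, mul_zero]
  have hPN : ∀ p a' : {x : V // x ≠ v} × Fin d,
      (P * Nn) (embm v d p) (embm v d a')
        = (Mst * ((lap G d W).submatrix (embm v d) (embm v d))⁻¹) p a' := by
    intro p a'
    rw [Matrix.mul_apply, Matrix.mul_apply]
    rw [sum_emb (v := v) d (fun b => P (embm v d p) b * Nn b (embm v d a'))
      (fun k => by
        show P (embm v d p) (v, k) * Nn (v, k) (embm v d a') = 0
        rw [hNrow, mul_zero])]
    refine Finset.sum_congr rfl fun b' _ => ?_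
    rw [hMP p b', hNemb b' a']
  rw [hLpX, hX]
  ext p q
  rw [Matrix.submatrix_apply, Matrix.mul_apply, Matrix.mul_apply]
  rw [sum_emb (v := v) d (fun a => (P * Nn) (embm v d p) a * P a (embm v d q))
    (fun k => by
      show (P * Nn) (embm v d p) (v, k) * P (v, k) (embm v d q) = 0
      rw [hPNzero, zero_mul])]
  refine Finset.sum_congr rfl fun a' _ => ?_
  rw [hPN p a', hMP a' q]
end

section
/- Let T = (V,E) be a tree with lower triangular s×s matrix edge weights with positive diagonal entries, and let v be a vertex with a branch B at v. If M_v(B) is the bottleneck matrix of B in T and M_v^{(j)}(B) is the bottleneck matrix of B in the induced positively weighted tree T^{(j)} (with edge weights the j-th diagonal entries w_{jj}(e)), then σ(M_v(B)) = ⋃_{j=1}^{s} σ(M_v^{(j)}(B)) and ρ(M_v(B)) = max_{1 ≤ j ≤ s} ρ(M_v^{(j)}(B)). -/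
open scoped Classical
open Matrix

/-- The spectral radius of a real square matrix. -/
noncomputable def sRad {ι : Type*} [Fintype ι] [DecidableEq ι] (A : Matrix ι ι ℝ) : ℝ :=
  sSup {r : ℝ | ∃ μ ∈ spectrum ℂ (A.map (fun x : ℝ => (x : ℂ))), r = ‖μ‖}

/-- The branch `B_x(y)`: the set of vertices of the component of `T - x` containing `y`. -/
def branch {V : Type*} {G : SimpleGraph V} (hT : G.IsTree) (x y : V) : Set V :=
  {a | a ≠ x ∧ x ∉ (pathWalk hT a y).support}

/-- The bottleneck matrix `M_x(y)` of the branch `B_x(y)` based at `x`. -/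
noncomputable def bottleneck {V : Type*} {G : SimpleGraph V} (hT : G.IsTree) (d : ℕ)
    (W : Sym2 V → Matrix (Fin d) (Fin d) ℝ) (x y : V) :
    Matrix (↥(branch hT x y) × Fin d) (↥(branch hT x y) × Fin d) ℝ :=
  Matrix.of fun p q =>
    (∑ e ∈ (pathEdges hT (p.1 : V) x).toFinset ∩ (pathEdges hT (q.1 : V) x).toFinset,
      (W e)⁻¹) p.2 q.2

/-- The scalar bottleneck matrix of the branch `B_x(y)` in the induced positively weighted
tree `T^{(j)}` whose edge weights are the `j`-th diagonal entries of the matrix weights. -/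
noncomputable def bottleneckScalar {V : Type*} {G : SimpleGraph V} (hT : G.IsTree) (d : ℕ)
    (W : Sym2 V → Matrix (Fin d) (Fin d) ℝ) (j : Fin d) (x y : V) :
    Matrix (↥(branch hT x y)) (↥(branch hT x y)) ℝ :=
  Matrix.of fun a b =>
    ∑ e ∈ (pathEdges hT (a : V) x).toFinset ∩ (pathEdges hT (b : V) x).toFinset,
      (W e (j : Fin d) j)⁻¹

lemma bottleneck_apply {V : Type*} {G : SimpleGraph V} (hT : G.IsTree) (d : ℕ)
    (W : Sym2 V → Matrix (Fin d) (Fin d) ℝ) (x y : V)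
    (p q : ↥(branch hT x y) × Fin d) :
    bottleneck hT d W x y p q =
      ∑ e ∈ (pathEdges hT (p.1 : V) x).toFinset ∩ (pathEdges hT (q.1 : V) x).toFinset,
        (W e)⁻¹ p.2 q.2 := by
  unfold bottleneck
  rw [Matrix.of_apply, Matrix.sum_apply]

lemma bottleneckScalar_apply {V : Type*} {G : SimpleGraph V} (hT : G.IsTree) (d : ℕ)
    (W : Sym2 V → Matrix (Fin d) (Fin d) ℝ) (j : Fin d) (x y : V)
    (a b : ↥(branch hT x y)) :
    bottleneckScalar hT d W j x y a b =
      ∑ e ∈ (pathEdges hT (a : V) x).toFinset ∩ (pathEdges hT (b : V) x).toFinset,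
        (W e (j : Fin d) j)⁻¹ := rfl

lemma edge_mem {V : Type*} {G : SimpleGraph V} (hT : G.IsTree) {a b x : V} {e : Sym2 V}
    (he : e ∈ (pathEdges hT a x).toFinset ∩ (pathEdges hT b x).toFinset) : e ∈ G.edgeSet := by
  have h := (Finset.mem_inter.1 he).1
  rw [List.mem_toFinset] at h
  exact (pathWalk hT a x).edges_subset_edgeSet h

lemma triInvDiag {d : ℕ} (M : Matrix (Fin d) (Fin d) ℝ)
    (htri : M.BlockTriangular OrderDual.toDual) (hdiag : ∀ j, M j j ≠ 0) :
    M⁻¹.BlockTriangular OrderDual.toDual ∧ ∀ j, M⁻¹ j j = (M j j)⁻¹ := by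
  have hdet : IsUnit M.det := by
    rw [Matrix.det_of_lowerTriangular M htri]
    exact isUnit_iff_ne_zero.2 (Finset.prod_ne_zero_iff.2 fun j _ => hdiag j)
  have : Invertible M := M.invertibleOfIsUnitDet hdet
  have hinv : M⁻¹.BlockTriangular OrderDual.toDual :=
    blockTriangular_inv_of_blockTriangular htri
  refine ⟨hinv, fun j => ?_⟩
  have h1 : (M⁻¹ * M) j j = 1 := by rw [Matrix.nonsing_inv_mul M hdet]; simp [Matrix.one_apply]
  rw [Matrix.mul_apply] at h1
  rw [Finset.sum_eq_single j] at h1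
  · exact eq_inv_of_mul_eq_one_left h1
  · intro k _ hk
    rcases lt_or_gt_of_ne hk with h | h
    · rw [htri (show (OrderDual.toDual j : (Fin d)ᵒᵈ) < OrderDual.toDual k from h), mul_zero]
    · rw [hinv (show (OrderDual.toDual k : (Fin d)ᵒᵈ) < OrderDual.toDual j from h), zero_mul]
  · simp

lemma specMemIff {ι : Type*} [Fintype ι] [DecidableEq ι] (M : Matrix ι ι ℂ) (μ : ℂ) :
    μ ∈ spectrum ℂ M ↔ (algebraMap ℂ (Matrix ι ι ℂ) μ - M).det = 0 := by
  rw [spectrum.mem_iff, Matrix.isUnit_iff_isUnit_det, isUnit_iff_ne_zero, not_ne_iff]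

/-- For a tree with lower triangular matrix edge weights with positive diagonal entries,
the spectrum of a bottleneck matrix is the union of the spectra of the scalar bottleneck
matrices of the induced trees `T^{(j)}`, and its spectral radius is the maximum of their
spectral radii. -/
theorem bottleneck_spectrum_lowerTriangular {V : Type*} [Fintype V] [DecidableEq V]
    (G : SimpleGraph V) (hT : G.IsTree) (d : ℕ) (hd : 0 < d)
    (W : Sym2 V → Matrix (Fin d) (Fin d) ℝ)
    (htri : ∀ e ∈ G.edgeSet, ∀ l k : Fin d, l < k → W e l k = 0)
    (hdiag : ∀ e ∈ G.edgeSet, ∀ j : Fin d, 0 < W e j j)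
    (v u : V) (hadj : G.Adj v u) :
    spectrum ℂ ((bottleneck hT d W v u).map (fun x : ℝ => (x : ℂ))) =
      (⋃ j : Fin d,
        spectrum ℂ ((bottleneckScalar hT d W j v u).map (fun x : ℝ => (x : ℂ)))) ∧
    IsGreatest (Set.range fun j : Fin d => sRad (bottleneckScalar hT d W j v u))
      (sRad (bottleneck hT d W v u)) := by
  classical
  -- u is in the branch
  have huB : u ∈ branch hT v u := by
    refine ⟨hadj.ne', ?_⟩
    have hspec := (hT.existsUnique_path u u).choose_spec
    have hnil : pathWalk hT u u = SimpleGraph.Walk.nil :=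
      (hspec.2 SimpleGraph.Walk.nil SimpleGraph.Walk.IsPath.nil).symm
    rw [hnil]
    simpa using hadj.ne
  haveI : Nonempty ↥(branch hT v u) := ⟨⟨u, huB⟩⟩
  -- triangularity and diagonal of inverses of weights
  have hWfact : ∀ e ∈ G.edgeSet,
      (W e)⁻¹.BlockTriangular OrderDual.toDual ∧ ∀ j, (W e)⁻¹ j j = (W e j j)⁻¹ := by
    intro e he
    refine triInvDiag (W e) ?_ (fun j => (hdiag e he j).ne')
    intro i j hij
    exact htri e he i j hij
  set f : (↥(branch hT v u) × Fin d) → (Fin d)ᵒᵈ := fun p => OrderDual.toDual p.2 with hf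
  set Aℂ : Matrix (↥(branch hT v u) × Fin d) (↥(branch hT v u) × Fin d) ℂ :=
    (bottleneck hT d W v u).map (fun x : ℝ => (x : ℂ)) with hA
  set Sℂ : Fin d → Matrix ↥(branch hT v u) ↥(branch hT v u) ℂ :=
    fun j => (bottleneckScalar hT d W j v u).map (fun x : ℝ => (x : ℂ)) with hS
  -- the big matrix is block triangular
  have hBT : Aℂ.BlockTriangular f := by
    intro p q hpq
    have h0 : (bottleneck hT d W v u) p q = 0 := by
      rw [bottleneck_apply]
      refine Finset.sum_eq_zero fun e he => ?_
      exact (hWfact e (edge_mem hT he)).1 hpq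
    simp [hA, Matrix.map_apply, h0]
  -- identify the diagonal blocks
  have hblock : ∀ (μ : ℂ) (j : Fin d),
      ((algebraMap ℂ _ μ - Aℂ).toSquareBlock f (OrderDual.toDual j)).det =
        (algebraMap ℂ (Matrix ↥(branch hT v u) ↥(branch hT v u) ℂ) μ - Sℂ j).det := by
    intro μ j
    have hsnd : ∀ p : {p : ↥(branch hT v u) × Fin d // f p = OrderDual.toDual j},
        (p : ↥(branch hT v u) × Fin d).2 = j := fun p => congrArg OrderDual.ofDual p.2
    let e : {p : ↥(branch hT v u) × Fin d // f p = OrderDual.toDual j} ≃ ↥(branch hT v u) :=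
      { toFun := fun p => (p : ↥(branch hT v u) × Fin d).1
        invFun := fun a => ⟨(a, j), rfl⟩
        left_inv := by
          rintro ⟨⟨a, i⟩, hp⟩
          have : i = j := congrArg OrderDual.ofDual hp
          subst this; rfl
        right_inv := fun a => rfl }
    rw [← Matrix.det_submatrix_equiv_self e (algebraMap ℂ _ μ - Sℂ j)]
    congr 1
    ext p q
    have hp2 := hsnd p
    have hq2 := hsnd q
    have hentry : Aℂ (p : _) (q : _) = Sℂ j (e p) (e q) := by
      simp only [hA, hS, Matrix.map_apply]
      congr 1
      rw [bottleneck_apply, bottleneckScalar_apply, hp2, hq2]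
      refine Finset.sum_congr rfl fun x hx => ?_
      exact ((hWfact x (edge_mem hT hx)).2 j)
    have hiff : (p : ↥(branch hT v u) × Fin d) = (q : _) ↔ e p = e q := by
      constructor
      · intro h; exact congrArg Prod.fst h
      · intro h; exact Prod.ext h (hp2.trans hq2.symm)
    simp only [Matrix.toSquareBlock_def, Matrix.sub_apply, Matrix.submatrix_apply,
      Matrix.algebraMap_matrix_apply, Matrix.of_apply]
    rw [hentry]
    congr 1
    by_cases h : (p : ↥(branch hT v u) × Fin d) = (q : _)
    · rw [if_pos h, if_pos (hiff.1 h)]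
    · rw [if_neg h, if_neg (fun hc => h (hiff.2 hc))]
  -- determinant factorization
  have hdetfac : ∀ μ : ℂ, (algebraMap ℂ _ μ - Aℂ).det =
      ∏ j : Fin d, (algebraMap ℂ (Matrix ↥(branch hT v u) ↥(branch hT v u) ℂ) μ - Sℂ j).det := by
    intro μ
    have htriD : (algebraMap ℂ _ μ - Aℂ).BlockTriangular f := by
      have : (algebraMap ℂ (Matrix (↥(branch hT v u) × Fin d) (↥(branch hT v u) × Fin d) ℂ) μ)
          = Matrix.diagonal (fun _ => μ) := by
        ext i k
        simp [Matrix.algebraMap_matrix_apply, Matrix.diagonal]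
      rw [this]
      exact (Matrix.blockTriangular_diagonal _).sub hBT
    rw [htriD.det_fintype]
    rw [← Equiv.prod_comp (OrderDual.toDual : Fin d ≃ (Fin d)ᵒᵈ)]
    exact Finset.prod_congr rfl fun j _ => hblock μ j
  -- spectrum equality
  have hspec : spectrum ℂ Aℂ = ⋃ j : Fin d, spectrum ℂ (Sℂ j) := by
    ext μ
    rw [specMemIff, hdetfac, Finset.prod_eq_zero_iff]
    simp only [Set.mem_iUnion, specMemIff]
    constructor
    · rintro ⟨j, _, hj⟩; exact ⟨j, hj⟩
    · rintro ⟨j, hj⟩; exact ⟨j, Finset.mem_univ j, hj⟩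
  refine ⟨hspec, ?_⟩
  -- spectral radius part
  set Tset : Set ℝ := {r : ℝ | ∃ μ ∈ spectrum ℂ Aℂ, r = ‖μ‖} with hT1
  set Tj : Fin d → Set ℝ := fun j => {r : ℝ | ∃ μ ∈ spectrum ℂ (Sℂ j), r = ‖μ‖} with hT2
  have hTun : Tset = ⋃ j, Tj j := by
    ext r
    constructor
    · rintro ⟨μ, hμ, rfl⟩
      rw [hspec] at hμ
      obtain ⟨j, hj⟩ := Set.mem_iUnion.1 hμ
      exact Set.mem_iUnion.2 ⟨j, μ, hj, rfl⟩
    · intro hr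
      obtain ⟨j, μ, hμ, rfl⟩ := Set.mem_iUnion.1 hr
      exact ⟨μ, by rw [hspec]; exact Set.mem_iUnion.2 ⟨j, hμ⟩, rfl⟩
  have hTjfin : ∀ j, (Tj j).Finite := by
    intro j
    have : Tj j = (fun μ : ℂ => ‖μ‖) '' spectrum ℂ (Sℂ j) := by
      ext r; simp [hT2, Set.mem_image, eq_comm]
    rw [this]
    exact ((Sℂ j).finite_spectrum).image _
  have hTfin : Tset.Finite := by
    rw [hTun]; exact Set.finite_iUnion hTjfin
  have hTjne : ∀ j, (Tj j).Nonempty := by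
    intro j
    obtain ⟨μ, hμ⟩ := spectrum.nonempty_of_isAlgClosed_of_finiteDimensional ℂ (Sℂ j)
    exact ⟨‖μ‖, μ, hμ, rfl⟩
  have hTne : Tset.Nonempty := by
    rw [hTun]
    obtain ⟨r, hr⟩ := hTjne ⟨0, hd⟩
    exact ⟨r, Set.mem_iUnion.2 ⟨⟨0, hd⟩, hr⟩⟩
  have hsub : ∀ j, Tj j ⊆ Tset := by
    intro j; rw [hTun]; exact Set.subset_iUnion Tj j
  have hRadA : sRad (bottleneck hT d W v u) = sSup Tset := rfl
  have hRadS : ∀ j, sRad (bottleneckScalar hT d W j v u) = sSup (Tj j) := fun _ => rfl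
  constructor
  · -- membership in range
    have hmem : sSup Tset ∈ Tset := hTne.csSup_mem hTfin
    have hmem' : sSup Tset ∈ ⋃ j, Tj j := by rw [← hTun]; exact hmem
    obtain ⟨j, hj⟩ := Set.mem_iUnion.1 hmem'
    refine ⟨j, ?_⟩
    show sRad (bottleneckScalar hT d W j v u) = sRad (bottleneck hT d W v u)
    rw [hRadS, hRadA]
    apply le_antisymm
    · exact csSup_le_csSup (hTfin.bddAbove) (hTjne j) (hsub j)
    · exact le_csSup ((hTjfin j).bddAbove) hj
  · rintro r ⟨j, rfl⟩
    show sRad (bottleneckScalar hT d W j v u) ≤ sRad (bottleneck hT d W v u)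
    rw [hRadS, hRadA]
    exact csSup_le_csSup (hTfin.bddAbove) (hTjne j) (hsub j)
end

section
/- Let T be a tree on n vertices with nonsingular s×s matrix edge weights and Laplacian L(T), and let e be an edge between vertices u and v with weight W(e). For 0 < α < 1, the matrix L(T) + E ⊗ W(e) is block-diagonal equal to diag([M_u(v) − α(J ⊗ W(e)⁻¹)]⁻¹, [M_v(u) − (1−α)(J ⊗ W(e)⁻¹)]⁻¹), where E is the n×n matrix with E_{vv} = α/(1−α), E_{uu} = (1−α)/α, E_{uv} = E_{vu} = 1, and all other entries 0. -/
open scoped Classical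
open Matrix

namespace TreeAux
open SimpleGraph SimpleGraph.Walk
variable {V : Type*} {G : SimpleGraph V} (hT : G.IsTree)
lemma pathWalk_isPath (a b : V) : (pathWalk hT a b).IsPath :=
  (hT.existsUnique_path a b).choose_spec.1
lemma eq_pathWalk {a b : V} {p : G.Walk a b} (hp : p.IsPath) : p = pathWalk hT a b :=
  (hT.existsUnique_path a b).choose_spec.2 p hp
lemma pathWalk_self (a : V) : pathWalk hT a a = Walk.nil :=
  (eq_pathWalk hT IsPath.nil).symm
lemma pathWalk_cons_of_not_mem {x n c : V} (h : G.Adj x n)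
    (hx : x ∉ (pathWalk hT n c).support) :
    pathWalk hT x c = Walk.cons h (pathWalk hT n c) :=
  ((eq_pathWalk hT ((pathWalk_isPath hT n c).cons hx))).symm
lemma pathWalk_adj {a b : V} (h : G.Adj a b) :
    pathWalk hT a b = Walk.cons h Walk.nil := by
  refine (eq_pathWalk hT ?_).symm
  simp [Walk.cons_isPath_iff, h.ne]
lemma pathWalk_split {x z c : V} (hx : x ∈ (pathWalk hT z c).support) :
    pathWalk hT z c = (pathWalk hT z x).append (pathWalk hT x c) := by
  have h1 := eq_pathWalk hT ((pathWalk_isPath hT z c).takeUntil hx)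
  have h2 := eq_pathWalk hT ((pathWalk_isPath hT z c).dropUntil hx)
  rw [← h1, ← h2, (pathWalk hT z c).take_spec hx]
lemma pathWalk_cons_of_adj_mem {n x c : V} (h : G.Adj n x)
    (hx : x ∈ (pathWalk hT n c).support) :
    pathWalk hT n c = Walk.cons h (pathWalk hT x c) := by
  rw [pathWalk_split hT hx, pathWalk_adj hT h]; rfl
lemma pathWalk_reverse (a b : V) : (pathWalk hT a b).reverse = pathWalk hT b a :=
  eq_pathWalk hT (pathWalk_isPath hT a b).reverse
lemma mem_edges_head {x w c n : V} (h : G.Adj x w) (q : G.Walk w c) (hq : x ∉ q.support) :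
    s(x, n) ∈ (Walk.cons h q).edges ↔ n = w := by
  simp only [Walk.edges_cons, List.mem_cons]
  constructor
  · rintro (he | he)
    · rcases Sym2.eq_iff.mp he with ⟨-, rfl⟩ | ⟨rfl, rfl⟩
      · rfl
      · exact absurd q.start_mem_support hq
    · exact absurd (q.fst_mem_support_of_mem_edges he) hq
  · rintro rfl; exact Or.inl rfl

variable (d : ℕ) (W : Sym2 V → Matrix (Fin d) (Fin d) ℝ)

/-- `Fz a z y = ∑_{f ∈ P(y,a) ∩ P(z,a)} W f⁻¹`. -/
noncomputable def Fz (a z y : V) : Matrix (Fin d) (Fin d) ℝ :=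
  ∑ f ∈ (pathEdges hT y a).toFinset ∩ (pathEdges hT z a).toFinset, (W f)⁻¹

lemma Fz_base (a z : V) : Fz hT d W a z a = 0 := by
  simp [Fz, pathEdges, pathWalk_self]

lemma Fz_cons {a z x n : V} (h : G.Adj x n)
    (hrep : pathWalk hT x a = Walk.cons h (pathWalk hT n a)) :
    Fz hT d W a z x = Fz hT d W a z n +
      (if s(x, n) ∈ pathEdges hT z a then (W s(x, n))⁻¹ else 0) := by
  have hnodup : (pathWalk hT x a).edges.Nodup := (pathWalk_isPath hT x a).isTrail.edges_nodup
  rw [hrep] at hnodup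
  simp only [Walk.edges_cons, List.nodup_cons] at hnodup
  have hE : (pathEdges hT x a).toFinset
      = insert s(x, n) (pathEdges hT n a).toFinset := by
    simp [pathEdges, hrep]
  have hnm : s(x, n) ∉ (pathEdges hT n a).toFinset := by
    simpa [pathEdges] using hnodup.1
  rw [Fz, Fz, hE]
  by_cases hz : s(x, n) ∈ pathEdges hT z a
  · rw [Finset.insert_inter_of_mem (List.mem_toFinset.mpr hz),
      Finset.sum_insert (by simp [hnm]), if_pos hz, add_comm]
  · rw [Finset.insert_inter_of_notMem (fun hc => hz (List.mem_toFinset.mp hc)), if_neg hz,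
      add_zero]

lemma sum_nbhd [Fintype V]
    (hW : ∀ e ∈ G.edgeSet, IsUnit (W e)) (a z x : V) (hx : x ≠ a) :
    ∑ n ∈ G.neighborFinset x,
        W s(x, n) * (Fz hT d W a z x - Fz hT d W a z n)
      = if x = z then 1 else 0 := by
  have hWinv : ∀ {p q : V}, G.Adj p q → W s(p, q) * (W s(p, q))⁻¹ = 1 := fun h =>
    Matrix.mul_nonsing_inv _ ((Matrix.isUnit_iff_isUnit_det _).mp (hW _ h))
  have hval : ∀ n, G.Adj x n →
      W s(x, n) * (Fz hT d W a z x - Fz hT d W a z n) =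
        if s(x, n) ∈ pathEdges hT z a then
          (if x ∈ (pathWalk hT n a).support then (-1 : Matrix (Fin d) (Fin d) ℝ) else 1)
        else 0 := by
    intro n hn
    by_cases ht : x ∈ (pathWalk hT n a).support
    · have hrep := pathWalk_cons_of_adj_mem hT hn.symm ht
      have hstep := Fz_cons hT d W (z := z) hn.symm hrep
      rw [show s(n, x) = s(x, n) from Sym2.eq_swap] at hstep
      have hd : Fz hT d W a z x - Fz hT d W a z n
          = -(if s(x, n) ∈ pathEdges hT z a then (W s(x, n))⁻¹ else 0) := by
        rw [hstep, sub_add_cancel_left]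
      rw [hd, mul_neg, mul_ite, hWinv hn, mul_zero, if_pos ht]
      split_ifs <;> simp
    · have hrep := pathWalk_cons_of_not_mem hT hn ht
      have hstep := Fz_cons hT d W (z := z) hn hrep
      have hd : Fz hT d W a z x - Fz hT d W a z n
          = (if s(x, n) ∈ pathEdges hT z a then (W s(x, n))⁻¹ else 0) := by
        rw [hstep, add_sub_cancel_left]
      rw [hd, mul_ite, hWinv hn, mul_zero, if_neg ht]
  by_cases hxz : x = z
  · subst hxz
    obtain ⟨w, hw, q, hq⟩ := Walk.exists_eq_cons_of_ne hx (pathWalk hT x a)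
    have hpp := pathWalk_isPath hT x a
    rw [hq, Walk.cons_isPath_iff] at hpp
    have hmem : ∀ n : V, s(x, n) ∈ pathEdges hT x a ↔ n = w := by
      intro n
      rw [pathEdges, hq]
      exact mem_edges_head hw q hpp.2
    have hqP : q = pathWalk hT w a := eq_pathWalk hT hpp.1
    have hterm : ∀ n ∈ G.neighborFinset x,
        W s(x, n) * (Fz hT d W a x x - Fz hT d W a x n)
          = if n = w then (1 : Matrix (Fin d) (Fin d) ℝ) else 0 := by
      intro n hn
      rw [hval n ((SimpleGraph.mem_neighborFinset G x n).mp hn)]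
      by_cases hnw : n = w
      · subst hnw
        rw [if_pos ((hmem n).mpr rfl), if_neg (by rw [← hqP]; exact hpp.2), if_pos rfl]
      · rw [if_neg (fun hc => hnw ((hmem n).mp hc)), if_neg hnw]
    rw [Finset.sum_congr rfl hterm, Finset.sum_ite_eq' _ w _,
      if_pos ((SimpleGraph.mem_neighborFinset G x w).mpr hw), if_pos rfl]
  · by_cases hsupp : x ∈ (pathWalk hT z a).support
    · have hps := pathWalk_split hT hsupp
      obtain ⟨np, hp, r', hr⟩ := Walk.exists_eq_cons_of_ne hx (pathWalk hT x a)
      have hrp := pathWalk_isPath hT x a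
      rw [hr, Walk.cons_isPath_iff] at hrp
      obtain ⟨nm, hm, q'', hq'⟩ := Walk.exists_eq_cons_of_ne hxz (pathWalk hT x z)
      have hqp := pathWalk_isPath hT x z
      rw [hq', Walk.cons_isPath_iff] at hqp
      have hqe : ∀ n : V, s(x, n) ∈ (pathWalk hT z x).edges ↔ n = nm := by
        intro n
        rw [show (pathWalk hT z x).edges = (pathWalk hT x z).edges.reverse by
          rw [← pathWalk_reverse hT x z, Walk.edges_reverse], List.mem_reverse, hq']
        exact mem_edges_head hm q'' hqp.2
      have hre : ∀ n : V, s(x, n) ∈ (pathWalk hT x a).edges ↔ n = np := by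
        intro n; rw [hr]; exact mem_edges_head hp r' hrp.2
      have htow : x ∉ (pathWalk hT np a).support := by
        rw [← eq_pathWalk hT hrp.1]; exact hrp.2
      have hnm_r : nm ∉ (pathWalk hT x a).support := by
        have hnd := (pathWalk_isPath hT z a).support_nodup
        rw [hps, Walk.support_append] at hnd
        have hdisj := (List.nodup_append'.mp hnd).2.2
        have hnq : nm ∈ (pathWalk hT z x).support := by
          have h1 : nm ∈ (pathWalk hT x z).support := by
            rw [hq', Walk.support_cons]
            exact List.mem_cons_of_mem _ q''.start_mem_support
          rwa [← pathWalk_reverse hT z x, Walk.support_reverse, List.mem_reverse] at h1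
        intro hmem
        refine hdisj hnq ?_
        have hcons := (pathWalk hT x a).support_eq_cons
        rw [hcons] at hmem
        rcases List.mem_cons.mp hmem with h1 | h1
        · exact absurd h1.symm hm.ne
        · exact h1
      have haway : x ∈ (pathWalk hT nm a).support := by
        rw [pathWalk_cons_of_not_mem hT hm.symm hnm_r, Walk.support_cons]
        exact List.mem_cons_of_mem _ (pathWalk hT x a).start_mem_support
      have hnpm : np ≠ nm := by
        intro he
        have h1 : s(x, np) ∈ (pathWalk hT x a).edges := (hre np).mpr rfl
        have h2 : s(x, np) ∈ (pathWalk hT z x).edges := (hqe np).mpr he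
        have hnd := (pathWalk_isPath hT z a).isTrail.edges_nodup
        rw [hps, Walk.edges_append] at hnd
        exact (List.nodup_append'.mp hnd).2.2 h2 h1
      have hEz : ∀ n : V, s(x, n) ∈ pathEdges hT z a ↔ (n = nm ∨ n = np) := by
        intro n
        rw [pathEdges, hps, Walk.edges_append, List.mem_append, hqe, hre]
      have hterm : ∀ n ∈ G.neighborFinset x,
          W s(x, n) * (Fz hT d W a z x - Fz hT d W a z n)
            = (if n = np then (1 : Matrix (Fin d) (Fin d) ℝ) else 0)
              + (if n = nm then (-1 : Matrix (Fin d) (Fin d) ℝ) else 0) := by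
        intro n hn
        rw [hval n ((SimpleGraph.mem_neighborFinset G x n).mp hn)]
        by_cases h1 : n = np
        · subst h1
          rw [if_pos ((hEz n).mpr (Or.inr rfl)), if_neg htow, if_pos rfl,
            if_neg (fun hc => hnpm hc), add_zero]
        · by_cases h2 : n = nm
          · subst h2
            rw [if_pos ((hEz n).mpr (Or.inl rfl)), if_pos haway, if_neg h1, if_pos rfl, zero_add]
          · have hno : s(x, n) ∉ pathEdges hT z a := fun hc => by
              rcases (hEz n).mp hc with h | h
              · exact h2 h
              · exact h1 h
            rw [if_neg hno, if_neg h1, if_neg h2, add_zero]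
      rw [Finset.sum_congr rfl hterm, Finset.sum_add_distrib,
        Finset.sum_ite_eq' _ np _, Finset.sum_ite_eq' _ nm _,
        if_pos ((SimpleGraph.mem_neighborFinset G x np).mpr hp),
        if_pos ((SimpleGraph.mem_neighborFinset G x nm).mpr hm), if_neg hxz]
      exact add_neg_cancel 1
    · rw [if_neg hxz]
      apply Finset.sum_eq_zero
      intro n hn
      rw [hval n ((SimpleGraph.mem_neighborFinset G x n).mp hn), if_neg]
      intro hmem
      exact hsupp ((pathWalk hT z a).fst_mem_support_of_mem_edges hmem)

variable {a b x n z : V}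

lemma b_mem_branch (hab : G.Adj a b) : b ∈ branch hT a b :=
  ⟨hab.ne', by rw [pathWalk_self]; simp [hab.ne]⟩

lemma mem_branch_of_adj (hx : x ∈ branch hT a b) (h : G.Adj x n) (hn : n ≠ a) :
    n ∈ branch hT a b := by
  refine ⟨hn, ?_⟩
  by_cases hc : n ∈ (pathWalk hT x b).support
  · intro ha
    apply hx.2
    rw [pathWalk_split hT hc]
    exact Walk.subset_support_append_right _ _ ha
  · rw [pathWalk_cons_of_not_mem hT h.symm hc, Walk.support_cons]
    intro hmem
    rcases List.mem_cons.mp hmem with h1 | h1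
    · exact hn h1.symm
    · exact hx.2 h1

lemma adj_a_of_mem (hab : G.Adj a b) (hx : x ∈ branch hT a b) (h : G.Adj x a) : x = b := by
  have hcons := pathWalk_cons_of_not_mem hT h.symm hx.2
  have hs : (pathWalk hT x b).support = [b] := by
    have h2 := congrArg Walk.support hcons
    rw [pathWalk_adj hT hab] at h2
    have h3 : [b] = (pathWalk hT x b).support := by simpa [Walk.support_cons] using h2
    exact h3.symm
  have h2 := (pathWalk hT x b).support_eq_cons
  rw [hs] at h2
  injection h2 with h3 _
  exact h3.symm

lemma branch_total (hab : G.Adj a b) (hx : x ∉ branch hT a b) : x ∈ branch hT b a := by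
  by_cases hxa : x = a
  · subst hxa
    exact ⟨hab.ne, by rw [pathWalk_self]; simp [hab.ne']⟩
  · have ha : a ∈ (pathWalk hT x b).support := by
      by_contra hc
      exact hx ⟨hxa, hc⟩
    have hsplit := pathWalk_split hT ha
    have hxb : x ≠ b := by
      rintro rfl
      rw [pathWalk_self, Walk.support_nil] at ha
      exact hab.ne (List.mem_singleton.mp ha)
    refine ⟨hxb, ?_⟩
    have hnd := (pathWalk_isPath hT x b).support_nodup
    rw [hsplit, Walk.support_append, pathWalk_adj hT hab] at hnd
    have hdisj := (List.nodup_append'.mp hnd).2.2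
    intro hb
    exact hdisj hb (by simp [Walk.support_cons])

lemma branch_disjoint (hab : G.Adj a b) (h1 : x ∈ branch hT a b)
    (h2 : x ∈ branch hT b a) : False := by
  have hb : a ∉ (pathWalk hT b x).support := by
    rw [← pathWalk_reverse hT x b, Walk.support_reverse]
    simpa using h1.2
  have hcons := pathWalk_cons_of_not_mem hT hab hb
  apply h2.2
  rw [← pathWalk_reverse hT a x, Walk.support_reverse, List.mem_reverse, hcons,
    Walk.support_cons]
  exact List.mem_cons_of_mem _ (pathWalk hT b x).start_mem_support

lemma edge_mem_pathEdges (hab : G.Adj a b) (hz : z ∈ branch hT a b) :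
    s(a, b) ∈ pathEdges hT z a := by
  have hb : a ∉ (pathWalk hT b z).support := by
    rw [← pathWalk_reverse hT z b, Walk.support_reverse]
    simpa using hz.2
  have hcons := pathWalk_cons_of_not_mem hT hab hb
  rw [pathEdges, ← pathWalk_reverse hT a z, Walk.edges_reverse, List.mem_reverse, hcons,
    Walk.edges_cons]
  exact List.mem_cons_self

lemma Fz_b (hab : G.Adj a b) (hz : z ∈ branch hT a b) :
    Fz hT d W a z b = (W s(a, b))⁻¹ := by
  rw [Fz]
  have hb : (pathEdges hT b a).toFinset = {s(a, b)} := by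
    rw [pathEdges, pathWalk_adj hT hab.symm, Sym2.eq_swap]
    simp
  rw [hb, Finset.singleton_inter_of_mem
    (List.mem_toFinset.mpr (edge_mem_pathEdges hT hab hz)), Finset.sum_singleton]

lemma key [Fintype V] [DecidableEq V]
    (hW : ∀ e ∈ G.edgeSet, IsUnit (W e)) (hab : G.Adj a b)
    {β : ℝ} (hβ : 1 - β ≠ 0) :
    (bottleneck hT d W a b -
        Matrix.of (fun p q : ↥(branch hT a b) × Fin d => β * (W s(a, b))⁻¹ p.2 q.2))⁻¹ =
    Matrix.of (fun p q : ↥(branch hT a b) × Fin d =>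
      lap G d W (p.1.1, p.2) (q.1.1, q.2) +
        (if p.1.1 = b ∧ q.1.1 = b then β / (1 - β) else 0) * W s(a, b) p.2 q.2) := by
  have hBmem : b ∈ branch hT a b := b_mem_branch hT hab
  set Br := branch hT a b with hBr
  set We := W s(a, b) with hWe
  set c : ℝ := β / (1 - β) with hc
  have hWeinv : We * We⁻¹ = 1 :=
    Matrix.mul_nonsing_inv _ ((Matrix.isUnit_iff_isUnit_det _).mp (hW _ hab))
  set L : ↥Br → ↥Br → Matrix (Fin d) (Fin d) ℝ := fun x y =>
    (if x.1 = y.1 then (∑ n ∈ G.neighborFinset x.1, W s(x.1, n))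
      else if G.Adj x.1 y.1 then -(W s(x.1, y.1)) else 0) with hL
  set c2 : ↥Br → ↥Br → ℝ := fun x y => if x.1 = b ∧ y.1 = b then c else 0 with hc2
  set NB : ↥Br → ↥Br → Matrix (Fin d) (Fin d) ℝ := fun x y => L x y + c2 x y • We with hNB
  set AB : ↥Br → ↥Br → Matrix (Fin d) (Fin d) ℝ := fun y z =>
    Fz hT d W a z.1 y.1 - β • We⁻¹ with hAB
  have hblock : ∀ x z : ↥Br, (∑ y : ↥Br, NB x y * AB y z) = if x = z then 1 else 0 := by
    intro x z
    have hxa : x.1 ≠ a := x.2.1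
    set F : V → Matrix (Fin d) (Fin d) ℝ := Fz hT d W a z.1 with hF
    have hexpand : ∀ y : ↥Br, NB x y * AB y z =
        L x y * F y.1 - β • (L x y * We⁻¹) +
          (c2 x y • (We * F y.1) - (c2 x y * β) • (We * We⁻¹)) := by
      intro y
      show (L x y + c2 x y • We) * (F y.1 - β • We⁻¹) = _
      rw [add_mul, mul_sub, mul_sub, mul_smul_comm, smul_mul_assoc, smul_mul_assoc,
        mul_smul_comm, smul_smul]
    rw [Finset.sum_congr rfl fun y _ => hexpand y, Finset.sum_add_distrib,
      Finset.sum_sub_distrib, Finset.sum_sub_distrib, ← Finset.smul_sum, ← Finset.sum_mul]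
    have hirr : ¬ G.Adj x.1 x.1 := G.irrefl
    have hLsplit : ∀ y : ↥Br, L x y =
        (if y = x then (∑ n ∈ G.neighborFinset x.1, W s(x.1, n)) else 0) +
          (if G.Adj x.1 y.1 then -(W s(x.1, y.1)) else 0) := by
      intro y
      show (if (x.1 : V) = y.1 then _ else _) = _
      by_cases h1 : x.1 = y.1
      · have hyx : y = x := Subtype.ext h1.symm
        subst hyx
        rw [if_pos rfl, if_pos rfl, if_neg hirr, add_zero]
      · rw [if_neg h1, if_neg (fun hc' : y = x => h1 (congrArg Subtype.val hc').symm), zero_add]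
    have hsubty : ∀ g : V → Matrix (Fin d) (Fin d) ℝ,
        (∑ y : ↥Br, (if G.Adj x.1 y.1 then g y.1 else 0)) =
          (∑ n ∈ G.neighborFinset x.1, g n) - (if G.Adj x.1 a then g a else 0) := by
      intro g
      have h1 : (∑ y : ↥Br, (if G.Adj x.1 y.1 then g y.1 else 0)) =
          ∑ w ∈ Br.toFinset, (if G.Adj x.1 w then g w else 0) :=
        (Finset.sum_subtype (p := (· ∈ Br)) Br.toFinset (fun w => Set.mem_toFinset)
          (fun w => if G.Adj x.1 w then g w else 0)).symm
      have h2 : ∀ w ∈ Finset.univ \ Br.toFinset,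
          (if G.Adj x.1 w then g w else 0)
            = (if w = a then (if G.Adj x.1 a then g a else 0) else 0) := by
        intro w hw
        rw [Finset.mem_sdiff, Set.mem_toFinset] at hw
        by_cases hwa : w = a
        · subst hwa; rw [if_pos rfl]
        · rw [if_neg hwa, if_neg (fun hadj => hw.2 (mem_branch_of_adj hT x.2 hadj hwa))]
      have h3 : ∑ w ∈ Finset.univ \ Br.toFinset, (if G.Adj x.1 w then g w else 0)
          = (if G.Adj x.1 a then g a else 0) := by
        rw [Finset.sum_congr rfl h2, Finset.sum_ite_eq' _ a _, if_pos]
        rw [Finset.mem_sdiff, Set.mem_toFinset]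
        exact ⟨Finset.mem_univ a, fun hc' => hc'.1 rfl⟩
      have h4 := Finset.sum_sdiff (f := fun w => if G.Adj x.1 w then g w else 0)
        (Finset.subset_univ Br.toFinset)
      have h5 : ∑ w ∈ (Finset.univ : Finset V), (if G.Adj x.1 w then g w else 0)
          = ∑ n ∈ G.neighborFinset x.1, g n := by
        rw [SimpleGraph.neighborFinset_eq_filter, Finset.sum_filter]
      rw [h1, eq_sub_iff_add_eq, ← h3, ← h5, add_comm, h4]
    have hFa : F a = 0 := Fz_base hT d W a z.1
    have hS1 : (∑ y : ↥Br, L x y * F y.1)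
        = (@ite _ ((x.1 : V) = z.1) (Classical.propDecidable _)
            (1 : Matrix (Fin d) (Fin d) ℝ) 0) := by
      have e1 : ∀ y : ↥Br, L x y * F y.1 =
          (if y = x then (∑ n ∈ G.neighborFinset x.1, W s(x.1, n)) * F y.1 else 0)
            + -(if G.Adj x.1 y.1 then W s(x.1, y.1) * F y.1 else 0) := by
        intro y
        rw [hLsplit y, add_mul]
        congr 1
        · split_ifs <;> simp
        · split_ifs <;> simp
      rw [Finset.sum_congr rfl fun y _ => e1 y, Finset.sum_add_distrib,
        Finset.sum_ite_eq' _ x _, if_pos (Finset.mem_univ x), Finset.sum_neg_distrib,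
        hsubty (fun n => W s(x.1, n) * F n)]
      rw [hFa, mul_zero, ite_self, sub_zero, Finset.sum_mul, ← sub_eq_add_neg,
        ← Finset.sum_sub_distrib]
      rw [Finset.sum_congr rfl fun n _ => (mul_sub (W s(x.1, n)) (F x.1) (F n)).symm, hF]
      exact sum_nbhd hT d W hW a z.1 x.1 hxa
    have hS2 : (∑ y : ↥Br, L x y) = (if (x.1 : V) = b then We else 0) := by
      have e1 : ∀ y : ↥Br, L x y =
          (if y = x then (∑ n ∈ G.neighborFinset x.1, W s(x.1, n)) else 0)
            + -(if G.Adj x.1 y.1 then W s(x.1, y.1) else 0) := by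
        intro y
        rw [hLsplit y]
        congr 1
        split_ifs <;> simp
      have hstep : (∑ y : ↥Br, L x y) = (if G.Adj x.1 a then W s(x.1, a) else 0) := by
        rw [Finset.sum_congr rfl fun y _ => e1 y, Finset.sum_add_distrib,
          Finset.sum_ite_eq' _ x _, if_pos (Finset.mem_univ x), Finset.sum_neg_distrib,
          hsubty (fun n => W s(x.1, n)), neg_sub, add_comm, sub_add_cancel]
      rw [hstep]
      by_cases hxb : (x.1 : V) = b
      · rw [if_pos (show G.Adj x.1 a by rw [hxb]; exact hab.symm), if_pos hxb, hxb, hWe,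
          Sym2.eq_swap]
      · rw [if_neg (fun hadj => hxb (adj_a_of_mem hT hab x.2 hadj)), if_neg hxb]
    have hFb : F b = We⁻¹ := Fz_b hT d W hab z.2
    have hS3 : (∑ y : ↥Br, c2 x y • (We * F y.1))
        = (if (x.1 : V) = b then c • (We * We⁻¹) else 0) := by
      by_cases hxb : (x.1 : V) = b
      · have e : ∀ y : ↥Br, c2 x y • (We * F y.1) =
            (if y = (⟨b, hBmem⟩ : ↥Br) then c • (We * F y.1) else 0) := by
          intro y
          show (if (x.1 : V) = b ∧ (y.1 : V) = b then c else 0) • _ = _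
          by_cases hyb : y = (⟨b, hBmem⟩ : ↥Br)
          · rw [if_pos ⟨hxb, by rw [hyb]⟩, if_pos hyb]
          · rw [if_neg (fun hc' => hyb (Subtype.ext hc'.2)), zero_smul, if_neg hyb]
        rw [Finset.sum_congr rfl fun y _ => e y, Finset.sum_ite_eq' _ _ _,
          if_pos (Finset.mem_univ _), if_pos hxb]
        rw [show F (⟨b, hBmem⟩ : ↥Br).1 = We⁻¹ from hFb]
      · rw [if_neg hxb]
        apply Finset.sum_eq_zero
        intro y _
        show (if (x.1 : V) = b ∧ (y.1 : V) = b then c else 0) • _ = 0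
        rw [if_neg (fun hc' => hxb hc'.1), zero_smul]
    have hS4 : (∑ y : ↥Br, (c2 x y * β) • (We * We⁻¹))
        = (if (x.1 : V) = b then (c * β) • (We * We⁻¹) else 0) := by
      by_cases hxb : (x.1 : V) = b
      · have e : ∀ y : ↥Br, (c2 x y * β) • (We * We⁻¹) =
            (if y = (⟨b, hBmem⟩ : ↥Br) then (c * β) • (We * We⁻¹) else 0) := by
          intro y
          show ((if (x.1 : V) = b ∧ (y.1 : V) = b then c else 0) * β) • _ = _
          by_cases hyb : y = (⟨b, hBmem⟩ : ↥Br)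
          · rw [if_pos ⟨hxb, by rw [hyb]⟩, if_pos hyb]
          · rw [if_neg (fun hc' => hyb (Subtype.ext hc'.2)), zero_mul, zero_smul, if_neg hyb]
        rw [Finset.sum_congr rfl fun y _ => e y, Finset.sum_ite_eq' _ _ _,
          if_pos (Finset.mem_univ _), if_pos hxb]
      · rw [if_neg hxb]
        apply Finset.sum_eq_zero
        intro y _
        show ((if (x.1 : V) = b ∧ (y.1 : V) = b then c else 0) * β) • _ = 0
        rw [if_neg (fun hc' => hxb hc'.1), zero_mul, zero_smul]
    rw [hS1, hS2, hS3, hS4]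
    have hδ : (@ite _ ((x.1 : V) = z.1) (Classical.propDecidable _)
          (1 : Matrix (Fin d) (Fin d) ℝ) 0)
        = (if x = z then 1 else 0) := by
      by_cases hh : (x.1 : V) = z.1
      · rw [if_pos hh, if_pos (Subtype.ext hh)]
      · rw [if_neg hh, if_neg (fun hc' => hh (congrArg Subtype.val hc'))]
    by_cases hxb : (x.1 : V) = b
    · rw [if_pos hxb, if_pos hxb, if_pos hxb, hWeinv]
      have hone : c • (1 : Matrix (Fin d) (Fin d) ℝ) - (c * β) • 1 = β • 1 := by
        rw [← sub_smul]
        congr 1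
        rw [hc]
        field_simp
      rw [hone, sub_add_cancel, hδ]
    · rw [if_neg hxb, if_neg hxb, if_neg hxb, zero_mul, smul_zero, sub_zero, sub_zero,
        add_zero, hδ]
  apply Matrix.inv_eq_left_inv
  ext p q
  obtain ⟨x, i⟩ := p
  obtain ⟨z, k⟩ := q
  rw [Matrix.mul_apply, Fintype.sum_prod_type]
  have hNE : ∀ (y : ↥Br) (j : Fin d),
      lap G d W (x.1, i) (y.1, j) +
        (if (x.1 : V) = b ∧ (y.1 : V) = b then c else 0) * We i j = NB x y i j := by
    intro y j
    show _ = (L x y + c2 x y • We) i j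
    rw [Matrix.add_apply, Matrix.smul_apply, smul_eq_mul]
    congr 1
    show (lap G d W) (x.1, i) (y.1, j)
      = (if (x.1 : V) = y.1 then (∑ n ∈ G.neighborFinset x.1, W s(x.1, n))
          else if G.Adj x.1 y.1 then -(W s(x.1, y.1)) else 0) i j
    simp only [lap, Matrix.of_apply]
    by_cases h1 : (x.1 : V) = y.1
    · rw [if_pos h1, if_pos h1]
    · rw [if_neg h1, if_neg h1]
      by_cases h2 : G.Adj x.1 y.1
      · rw [if_pos h2, if_pos h2, Matrix.neg_apply]
      · rw [if_neg h2, if_neg h2, Matrix.zero_apply]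
  have hAE : ∀ (y : ↥Br) (j : Fin d),
      (bottleneck hT d W a b -
        Matrix.of fun p q : ↥Br × Fin d => β * We⁻¹ p.2 q.2) (y, j) (z, k)
        = AB y z j k := by
    intro y j
    show _ = (Fz hT d W a z.1 y.1 - β • We⁻¹) j k
    rw [Matrix.sub_apply, Matrix.sub_apply, Matrix.smul_apply, smul_eq_mul]
    rfl
  have hinner : ∀ y : ↥Br,
      (∑ j : Fin d,
        (Matrix.of fun p q : ↥Br × Fin d =>
          lap G d W (p.1.1, p.2) (q.1.1, q.2) +
            (if (p.1.1 : V) = b ∧ (q.1.1 : V) = b then c else 0) * We p.2 q.2) (x, i) (y, j) *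
        (bottleneck hT d W a b -
          Matrix.of fun p q : ↥Br × Fin d => β * We⁻¹ p.2 q.2) (y, j) (z, k))
      = (NB x y * AB y z) i k := by
    intro y
    rw [Matrix.mul_apply]
    apply Finset.sum_congr rfl
    intro j _
    rw [Matrix.of_apply, hNE y j, hAE y j]
  rw [Finset.sum_congr rfl fun y _ => hinner y, ← Matrix.sum_apply i k Finset.univ
    (fun y => NB x y * AB y z), hblock x z]
  by_cases hxz : x = z
  · subst hxz
    rw [if_pos rfl, Matrix.one_apply, Matrix.one_apply]
    by_cases hik : i = k
    · subst hik; rw [if_pos rfl, if_pos rfl]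
    · rw [if_neg hik, if_neg (fun hc' : (x, i) = (x, k) => hik (congrArg Prod.snd hc'))]
  · rw [if_neg hxz, Matrix.zero_apply, Matrix.one_apply,
      if_neg (fun hc' : (x, i) = (z, k) => hxz (congrArg Prod.fst hc'))]

end TreeAux

/-- For a tree with nonsingular matrix edge weights, an edge between `u` and `v` with
weight `W(e)`, and `0 < α < 1`: `L(T) + E ⊗ W(e)` is the block diagonal matrix
`diag([M_u(v) - α(J ⊗ W(e)⁻¹)]⁻¹, [M_v(u) - (1-α)(J ⊗ W(e)⁻¹)]⁻¹)`. -/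
theorem lap_add_E_eq_blockDiagonal {V : Type*} [Fintype V] [DecidableEq V]
    (G : SimpleGraph V) (hT : G.IsTree) (d : ℕ)
    (W : Sym2 V → Matrix (Fin d) (Fin d) ℝ)
    (hW : ∀ e ∈ G.edgeSet, IsUnit (W e))
    (u v : V) (hadj : G.Adj u v) (α : ℝ) (hα0 : 0 < α) (hα1 : α < 1) :
    letI We := W (Sym2.mk u v)
    letI E : V → V → ℝ := fun x y =>
      if x = v ∧ y = v then α / (1 - α)
      else if x = u ∧ y = u then (1 - α) / α
      else if (x = u ∧ y = v) ∨ (x = v ∧ y = u) then 1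
      else 0
    letI A : Matrix (↥(branch hT u v) × Fin d) (↥(branch hT u v) × Fin d) ℝ :=
      bottleneck hT d W u v -
        Matrix.of (fun p q : ↥(branch hT u v) × Fin d => α * We⁻¹ p.2 q.2)
    letI B : Matrix (↥(branch hT v u) × Fin d) (↥(branch hT v u) × Fin d) ℝ :=
      bottleneck hT d W v u -
        Matrix.of (fun p q : ↥(branch hT v u) × Fin d => (1 - α) * We⁻¹ p.2 q.2)
    ∀ p q : V × Fin d,
      (lap G d W + Matrix.of (fun p q : V × Fin d => E p.1 q.1 * We p.2 q.2)) p q =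
        if hp : p.1 ∈ branch hT u v then
          (if hq : q.1 ∈ branch hT u v then A⁻¹ (⟨p.1, hp⟩, p.2) (⟨q.1, hq⟩, q.2) else 0)
        else if hp' : p.1 ∈ branch hT v u then
          (if hq' : q.1 ∈ branch hT v u then B⁻¹ (⟨p.1, hp'⟩, p.2) (⟨q.1, hq'⟩, q.2) else 0)
        else 0 := by
  intro p q
  obtain ⟨x, i⟩ := p
  obtain ⟨z, k⟩ := q
  by_cases hp : x ∈ branch hT u v
  · rw [dif_pos hp]
    by_cases hq : z ∈ branch hT u v
    · rw [dif_pos hq]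
      have hk := TreeAux.key hT d W hW hadj (β := α) (by linarith)
      rw [hk]
      simp only [Matrix.add_apply, Matrix.of_apply]
      have hE : (if x = v ∧ z = v then α / (1 - α)
            else if x = u ∧ z = u then (1 - α) / α
            else if (x = u ∧ z = v) ∨ (x = v ∧ z = u) then 1 else 0)
          = (if x = v ∧ z = v then α / (1 - α) else 0) := by
        by_cases h1 : x = v ∧ z = v
        · rw [if_pos h1, if_pos h1]
        · rw [if_neg h1, if_neg h1, if_neg (fun h2 => hp.1 h2.1), if_neg]
          rintro (h3 | h3)
          · exact hp.1 h3.1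
          · exact hq.1 h3.2
      rw [hE]
    · rw [dif_neg hq]
      have hqz : z ∈ branch hT v u := TreeAux.branch_total hT hadj hq
      have hxz : x ≠ z := fun h => TreeAux.branch_disjoint hT hadj (h ▸ hp) hqz
      simp only [Matrix.add_apply, Matrix.of_apply, lap]
      rw [if_neg hxz]
      by_cases hadj2 : G.Adj x z
      · have hzu : z = u := by
          by_contra hzu
          exact hq (TreeAux.mem_branch_of_adj hT hp hadj2 hzu)
        have hxv : x = v := TreeAux.adj_a_of_mem hT hadj hp (hzu ▸ hadj2)
        subst hzu hxv
        rw [if_pos hadj2, if_neg (fun h => hadj.ne h.2), if_neg (fun h => hxz h.1),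
          if_pos (Or.inr ⟨rfl, rfl⟩),
          show (Sym2.mk x z : Sym2 V) = Sym2.mk z x from Sym2.eq_swap, one_mul]
        exact neg_add_cancel _
      · rw [if_neg hadj2,
          if_neg (fun h : x = v ∧ z = v => hq (by rw [h.2]; exact TreeAux.b_mem_branch hT hadj)),
          if_neg (fun h : x = u ∧ z = u => hp.1 h.1), if_neg, zero_mul, add_zero]
        rintro (h3 | h3)
        · exact hp.1 h3.1
        · exact hadj2 (h3.1 ▸ h3.2 ▸ hadj.symm)
  · rw [dif_neg hp]
    have hpx : x ∈ branch hT v u := TreeAux.branch_total hT hadj hp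
    rw [dif_pos hpx]
    by_cases hq : z ∈ branch hT v u
    · rw [dif_pos hq]
      have hk := TreeAux.key hT d W hW hadj.symm (β := 1 - α) (by linarith)
      rw [show (Sym2.mk v u : Sym2 V) = Sym2.mk u v from Sym2.eq_swap,
        show (1 : ℝ) - (1 - α) = α by ring] at hk
      rw [hk]
      simp only [Matrix.add_apply, Matrix.of_apply]
      have hE : (if x = v ∧ z = v then α / (1 - α)
            else if x = u ∧ z = u then (1 - α) / α
            else if (x = u ∧ z = v) ∨ (x = v ∧ z = u) then 1 else 0)
          = (if x = u ∧ z = u then (1 - α) / α else 0) := by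
        by_cases h2 : x = u ∧ z = u
        · rw [if_neg (fun h1 : x = v ∧ z = v => hpx.1 h1.1), if_pos h2, if_pos h2]
        · rw [if_neg (fun h1 : x = v ∧ z = v => hpx.1 h1.1), if_neg h2, if_neg h2, if_neg]
          rintro (h3 | h3)
          · exact hq.1 h3.2
          · exact hpx.1 h3.1
      rw [hE]
    · rw [dif_neg hq]
      have hqz : z ∈ branch hT u v := TreeAux.branch_total hT hadj.symm hq
      have hxz : x ≠ z := fun h => TreeAux.branch_disjoint hT hadj (h ▸ hqz) hpx
      simp only [Matrix.add_apply, Matrix.of_apply, lap]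
      rw [if_neg (fun h => hxz h)]
      by_cases hadj2 : G.Adj x z
      · have hzv : z = v := by
          by_contra hzv
          exact hq (TreeAux.mem_branch_of_adj hT hpx hadj2 hzv)
        have hxu : x = u := TreeAux.adj_a_of_mem hT hadj.symm hpx (hzv ▸ hadj2)
        subst hzv hxu
        rw [if_pos hadj2, if_neg (fun h => hxz h.1), if_neg (fun h => hadj.ne' h.2),
          if_pos (Or.inl ⟨rfl, rfl⟩), one_mul]
        exact neg_add_cancel _
      · rw [if_neg hadj2, if_neg (fun h : x = v ∧ z = v => hpx.1 h.1),
          if_neg (fun h : x = u ∧ z = u => hqz.1 h.2), if_neg, zero_mul, add_zero]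
        rintro (h3 | h3)
        · exact hadj2 (h3.1 ▸ h3.2 ▸ hadj)
        · exact hpx.1 h3.1
end

section
/- Let T be a tree whose edge weights are s×s lower triangular matrices with positive diagonal entries, and let L(T) be its Laplacian. Then the spectrum of L(T) equals the union over j = 1,…,s of the spectra of the (scalar) Laplacians L(T^{(j)}) of the induced positively weighted trees T^{(j)}; in particular, all eigenvalues of L(T) are nonnegative, and the smallest nonzero eigenvalue of L(T) equals min_{1 ≤ j ≤ s} μ(T^{(j)}), the minimum of the algebraic connectivities of the T^{(j)}. -/
open scoped Classical
open Matrix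

/-- The Laplacian matrix of a graph with scalar edge weights. -/
noncomputable def scalarLap {V : Type*} [Fintype V] (G : SimpleGraph V)
    (w : Sym2 V → ℝ) : Matrix V V ℝ :=
  Matrix.of fun x y =>
    if x = y then ∑ z ∈ G.neighborFinset x, w (Sym2.mk x z)
    else if G.Adj x y then -w (Sym2.mk x y) else 0

open scoped ComplexOrder

section Helpers

lemma mem_spectrum_iff_det' {n : Type*} [Fintype n] [DecidableEq n] (M : Matrix n n ℂ) (μ : ℂ) :
    μ ∈ spectrum ℂ M ↔ (algebraMap ℂ (Matrix n n ℂ) μ - M).det = 0 := by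
  rw [spectrum.mem_iff, Matrix.isUnit_iff_isUnit_det, isUnit_iff_ne_zero, not_not]

lemma not_mem_spectrum_zero_matrix {n : Type*} [Fintype n] [DecidableEq n] {μ : ℂ}
    (hμ : μ ≠ 0) : μ ∉ spectrum ℂ (0 : Matrix n n ℂ) := by
  rw [mem_spectrum_iff_det']
  simp [Matrix.algebraMap_eq_diagonal, Matrix.det_diagonal, Finset.prod_const, hμ]

lemma spectrum_complex_of_isHermitian {n : Type*} [Fintype n] [DecidableEq n] {M : Matrix n n ℂ}
    (hM : M.IsHermitian) :
    spectrum ℂ M = Set.range (fun i => (hM.eigenvalues i : ℂ)) := by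
  conv_lhs => rw [hM.spectral_theorem]
  rw [Unitary.conjStarAlgAut_apply, Unitary.spectrum_star_right_conjugate, spectrum_diagonal]
  ext x
  simp [Function.comp, RCLike.ofReal]

variable {V : Type*} [Fintype V] [DecidableEq V] (G : SimpleGraph V) (w : Sym2 V → ℝ)

lemma scalarLap_apply (x y : V) : scalarLap G w x y =
    (if x = y then ∑ z, (if G.Adj x z then w (Sym2.mk x z) else 0) else 0)
      - (if G.Adj x y then w (Sym2.mk x y) else 0) := by
  by_cases h : x = y
  · subst h
    simp [scalarLap, SimpleGraph.neighborFinset_eq_filter, Finset.sum_filter]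
  · simp [scalarLap, h]
    split_ifs <;> ring

lemma scalarLap_isHermitian : (scalarLap G w).IsHermitian := by
  ext x y
  simp only [conjTranspose_apply, star_trivial, scalarLap_apply]
  by_cases h : x = y
  · subst h; rfl
  · have : Sym2.mk y x = Sym2.mk x y := Sym2.eq_swap
    simp [h, Ne.symm h, G.adj_comm x y, this]

lemma scalarLap_posSemidef (hw : ∀ e ∈ G.edgeSet, 0 ≤ w e) :
    (scalarLap G w).PosSemidef := by
  refine Matrix.PosSemidef.of_dotProduct_mulVec_nonneg (scalarLap_isHermitian G w) fun x => ?_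
  set a : V → V → ℝ := fun u v => if G.Adj u v then w (Sym2.mk u v) else 0 with ha
  have ha_nonneg : ∀ u v, 0 ≤ a u v := by
    intro u v
    by_cases h : G.Adj u v
    · simpa [ha, h] using hw _ (G.mem_edgeSet.2 h)
    · simp [ha, h]
  have ha_symm : ∀ u v, a v u = a u v := by
    intro u v
    have : Sym2.mk v u = Sym2.mk u v := Sym2.eq_swap
    simp [ha, G.adj_comm u v, this]
  have per_u : ∀ u : V, x u * (∑ v, ((if u = v then (∑ z, a u z) else 0) - a u v) * x v)
      = ∑ v, a u v * (x u * x u - x u * x v) := by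
    intro u
    simp only [sub_mul]
    rw [Finset.sum_sub_distrib]
    simp only [ite_mul, zero_mul, Finset.sum_ite_eq, Finset.mem_univ, if_true]
    rw [mul_sub, Finset.sum_mul, Finset.mul_sum, Finset.mul_sum, ← Finset.sum_sub_distrib]
    exact Finset.sum_congr rfl fun v _ => by ring
  have hQ : dotProduct (star x) (scalarLap G w *ᵥ x)
      = ∑ u, ∑ v, a u v * (x u * x u - x u * x v) := by
    simp only [star_trivial, dotProduct, mulVec, dotProduct, scalarLap_apply, ha]
    exact Finset.sum_congr rfl fun u _ => per_u u
  have swap : (∑ u, ∑ v, a u v * (x u * x u - x u * x v))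
      = ∑ u, ∑ v, a u v * (x v * x v - x v * x u) := by
    rw [Finset.sum_comm]
    exact Finset.sum_congr rfl fun u _ => Finset.sum_congr rfl fun v _ => by rw [ha_symm]
  have key : (∑ u, ∑ v, a u v * (x u * x u - x u * x v))
        + (∑ u, ∑ v, a u v * (x v * x v - x v * x u))
      = ∑ u, ∑ v, a u v * ((x u - x v) * (x u - x v)) := by
    rw [← Finset.sum_add_distrib]
    refine Finset.sum_congr rfl fun u _ => ?_
    rw [← Finset.sum_add_distrib]
    exact Finset.sum_congr rfl fun v _ => by ring
  have nonneg : 0 ≤ ∑ u, ∑ v, a u v * ((x u - x v) * (x u - x v)) :=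
    Finset.sum_nonneg fun u _ => Finset.sum_nonneg fun v _ =>
      mul_nonneg (ha_nonneg u v) (mul_self_nonneg _)
  rw [hQ]
  linarith [key, nonneg, swap]

lemma posSemidef_map_complex {M : Matrix V V ℝ} (h : M.PosSemidef) :
    (M.map (fun x : ℝ => (x : ℂ))).PosSemidef := by
  obtain ⟨m, v, rfl⟩ := Matrix.posSemidef_iff_eq_sum_vecMulVec.mp h
  have hmap : (∑ i, vecMulVec (v i) (star (v i))).map (fun x : ℝ => (x : ℂ))
      = ∑ i, vecMulVec (fun k => (v i k : ℂ)) (star (fun k => (v i k : ℂ))) := by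
    ext a b
    simp [Matrix.sum_apply, vecMulVec_apply]
  rw [hmap]
  exact Matrix.posSemidef_sum _ fun i _ => Matrix.posSemidef_vecMulVec_self_star _

lemma lap_entry_zero (d : ℕ) (W : Sym2 V → Matrix (Fin d) (Fin d) ℝ)
    (htri : ∀ e ∈ G.edgeSet, ∀ l k : Fin d, l < k → W e l k = 0)
    {p q : V × Fin d} (h : p.2 < q.2) : lap G d W p q = 0 := by
  obtain ⟨u, l⟩ := p
  obtain ⟨v, k⟩ := q
  simp only [lap, Matrix.of_apply]
  by_cases h1 : u = v
  · subst h1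
    simp only [if_true]
    rw [Matrix.sum_apply]
    refine Finset.sum_eq_zero fun z hz => ?_
    rw [SimpleGraph.mem_neighborFinset] at hz
    exact htri _ (G.mem_edgeSet.2 hz) _ _ h
  · simp only [h1, if_false]
    split_ifs with h2
    · rw [htri _ (G.mem_edgeSet.2 h2) _ _ h, neg_zero]
    · rfl

lemma lap_entry_diag_block (d : ℕ) (W : Sym2 V → Matrix (Fin d) (Fin d) ℝ)
    (j : Fin d) (u v : V) :
    lap G d W (u, j) (v, j) = scalarLap G (fun e => W e j j) u v := by
  simp only [lap, scalarLap, Matrix.of_apply]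
  by_cases h : u = v
  · simp [h, Matrix.sum_apply]
  · simp [h]

end Helpers

/-- For a tree with lower triangular matrix edge weights with positive diagonal entries:
the spectrum of the block Laplacian `L(T)` is the union of the spectra of the scalar
Laplacians `L(T^{(j)})`; all eigenvalues of `L(T)` are (real and) nonnegative; and the
smallest nonzero eigenvalue of `L(T)` is the minimum over `j` of the smallest nonzero
eigenvalue (the algebraic connectivity) of `L(T^{(j)})`. -/
theorem lap_spectrum_lowerTriangular {V : Type*} [Fintype V] [DecidableEq V]
    (G : SimpleGraph V) (hT : G.IsTree) (d : ℕ) (hd : 0 < d)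
    (W : Sym2 V → Matrix (Fin d) (Fin d) ℝ)
    (htri : ∀ e ∈ G.edgeSet, ∀ l k : Fin d, l < k → W e l k = 0)
    (hdiag : ∀ e ∈ G.edgeSet, ∀ j : Fin d, 0 < W e j j) :
    letI Lc := (lap G d W).map (fun x : ℝ => (x : ℂ))
    letI Ljc : Fin d → Matrix V V ℂ := fun j =>
      (scalarLap G (fun e => W e j j)).map (fun x : ℝ => (x : ℂ))
    spectrum ℂ Lc = (⋃ j : Fin d, spectrum ℂ (Ljc j)) ∧
    (∀ μ ∈ spectrum ℂ Lc, ∃ r : ℝ, 0 ≤ r ∧ μ = (r : ℂ)) ∧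
    sInf {r : ℝ | r ≠ 0 ∧ (r : ℂ) ∈ spectrum ℂ Lc} =
      sInf (Set.range fun j : Fin d =>
        sInf {r : ℝ | r ≠ 0 ∧ (r : ℂ) ∈ spectrum ℂ (Ljc j)}) := by
  set Lc : Matrix (V × Fin d) (V × Fin d) ℂ := (lap G d W).map (fun x : ℝ => (x : ℂ)) with hLc
  set Ljc : Fin d → Matrix V V ℂ :=
    fun j => (scalarLap G (fun e => W e j j)).map (fun x : ℝ => (x : ℂ)) with hLjc
  -- determinant factorization
  have hdet : ∀ μ : ℂ, (algebraMap ℂ (Matrix (V × Fin d) (V × Fin d) ℂ) μ - Lc).det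
      = ∏ j : Fin d, (algebraMap ℂ (Matrix V V ℂ) μ - Ljc j).det := by
    intro μ
    have hbt : (algebraMap ℂ (Matrix (V × Fin d) (V × Fin d) ℂ) μ - Lc).BlockTriangular
        (fun p : V × Fin d => OrderDual.toDual p.2) := by
      intro p q hlt
      have hlt' : p.2 < q.2 := hlt
      have hpq : p ≠ q := by
        intro h; rw [h] at hlt'; exact lt_irrefl _ hlt'
      simp only [hLc, Matrix.sub_apply, Matrix.algebraMap_matrix_apply, if_neg hpq,
        Matrix.map_apply, lap_entry_zero G d W htri hlt', Complex.ofReal_zero, sub_zero]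
    rw [hbt.det_fintype, ← Equiv.prod_comp (OrderDual.toDual : Fin d ≃ (Fin d)ᵒᵈ)]
    refine Finset.prod_congr rfl fun j _ => ?_
    let e : V ≃ {p : V × Fin d // (fun p : V × Fin d => OrderDual.toDual p.2) p
        = OrderDual.toDual j} :=
      { toFun := fun v => ⟨(v, j), rfl⟩
        invFun := fun p => p.1.1
        left_inv := fun v => rfl
        right_inv := by
          rintro ⟨⟨u, k⟩, hk⟩
          have : k = j := OrderDual.toDual.injective hk
          subst this; rfl }
    have hsb : ((((algebraMap ℂ (Matrix (V × Fin d) (V × Fin d) ℂ)) μ - Lc).toSquareBlock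
        (fun p : V × Fin d => OrderDual.toDual p.2) (OrderDual.toDual j)).submatrix ⇑e ⇑e)
        = (algebraMap ℂ (Matrix V V ℂ)) μ - Ljc j := by
      ext u v
      have hentry : ((((algebraMap ℂ (Matrix (V × Fin d) (V × Fin d) ℂ)) μ - Lc).toSquareBlock
          (fun p : V × Fin d => OrderDual.toDual p.2) (OrderDual.toDual j)).submatrix ⇑e ⇑e) u v
          = ((algebraMap ℂ (Matrix (V × Fin d) (V × Fin d) ℂ)) μ - Lc) (u, j) (v, j) := rfl
      rw [hentry]
      simp only [hLc, hLjc, Matrix.sub_apply, Matrix.algebraMap_matrix_apply, Matrix.map_apply]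
      rw [lap_entry_diag_block G d W j u v]
      congr 1
      by_cases h : u = v
      · simp [h]
      · simp [h, fun hc : (u, j) = (v, j) => h (congrArg Prod.fst hc)]
    rw [← hsb, Matrix.det_submatrix_equiv_self]
  -- part 1
  have h1 : spectrum ℂ Lc = ⋃ j, spectrum ℂ (Ljc j) := by
    ext μ
    simp only [Set.mem_iUnion, mem_spectrum_iff_det', hdet μ, Finset.prod_eq_zero_iff,
      Finset.mem_univ, true_and]
  -- positive semidefiniteness
  have hpsd : ∀ j : Fin d, (Ljc j).PosSemidef := fun j =>
    posSemidef_map_complex (scalarLap_posSemidef G _ (fun e he => (hdiag e he j).le))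
  have hspec : ∀ j : Fin d, spectrum ℂ (Ljc j)
      = Set.range (fun i => (((hpsd j).1.eigenvalues i : ℝ) : ℂ)) := fun j =>
    spectrum_complex_of_isHermitian (hpsd j).1
  -- part 2
  have h2 : ∀ μ ∈ spectrum ℂ Lc, ∃ r : ℝ, 0 ≤ r ∧ μ = (r : ℂ) := by
    intro μ hμ
    rw [h1] at hμ
    obtain ⟨j, hμ⟩ := Set.mem_iUnion.1 hμ
    rw [hspec j] at hμ
    obtain ⟨i, rfl⟩ := hμ
    exact ⟨_, (hpsd j).eigenvalues_nonneg i, rfl⟩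
  refine ⟨h1, h2, ?_⟩
  -- part 3
  set S : Set ℝ := {r : ℝ | r ≠ 0 ∧ (r : ℂ) ∈ spectrum ℂ Lc} with hS
  set Sj : Fin d → Set ℝ := fun j => {r : ℝ | r ≠ 0 ∧ (r : ℂ) ∈ spectrum ℂ (Ljc j)} with hSj
  have hS_eq : S = ⋃ j, Sj j := by
    ext r
    constructor
    · rintro ⟨hr, hsp⟩
      rw [h1] at hsp
      obtain ⟨j, hj⟩ := Set.mem_iUnion.1 hsp
      exact Set.mem_iUnion.2 ⟨j, hr, hj⟩
    · intro h
      obtain ⟨j, hj⟩ := Set.mem_iUnion.1 h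
      exact ⟨hj.1, by rw [h1]; exact Set.mem_iUnion.2 ⟨j, hj.2⟩⟩
  have hSj_nonneg : ∀ j, ∀ r ∈ Sj j, (0 : ℝ) ≤ r := by
    intro j r hr
    obtain ⟨hr0, hrspec⟩ := hr
    rw [hspec j] at hrspec
    obtain ⟨i, hi⟩ := hrspec
    have hi' : (((hpsd j).1.eigenvalues i : ℝ) : ℂ) = (r : ℂ) := hi
    have : (hpsd j).1.eigenvalues i = r := by exact_mod_cast hi'
    exact this ▸ (hpsd j).eigenvalues_nonneg i
  have hSj_bdd : ∀ j, BddBelow (Sj j) := fun j => ⟨0, fun r hr => hSj_nonneg j r hr⟩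
  have hS_bdd : BddBelow S := by
    refine ⟨0, fun r hr => ?_⟩
    rw [hS_eq] at hr
    obtain ⟨j, hj⟩ := Set.mem_iUnion.1 hr
    exact hSj_nonneg j r hj
  by_cases hedge : ∃ u v : V, G.Adj u v
  · -- every Sj is nonempty
    have hSjne : ∀ j, (Sj j).Nonempty := by
      intro j
      by_contra hempty
      rw [Set.not_nonempty_iff_eq_empty] at hempty
      have hallzero : ∀ i, (hpsd j).1.eigenvalues i = 0 := by
        intro i
        by_contra hne
        have : ((hpsd j).1.eigenvalues i : ℝ) ∈ Sj j := by
          refine ⟨hne, ?_⟩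
          rw [hspec j]
          exact ⟨i, rfl⟩
        rw [hempty] at this
        exact this
      have hzero : Ljc j = 0 := by
        have := (hpsd j).1.spectral_theorem
        rw [this]
        have : RCLike.ofReal ∘ (hpsd j).1.eigenvalues = fun _ => (0 : ℂ) := by
          funext i; simp [Function.comp, hallzero i]
        rw [this]
        simp
      obtain ⟨u, v, huv⟩ := hedge
      have hpos : 0 < ∑ z ∈ G.neighborFinset u, W (Sym2.mk u z) j j := by
        apply Finset.sum_pos
        · intro z hz
          rw [SimpleGraph.mem_neighborFinset] at hz
          exact hdiag _ (G.mem_edgeSet.2 hz) j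
        · exact ⟨v, by rw [SimpleGraph.mem_neighborFinset]; exact huv⟩
      have hentry : Ljc j u u
          = ((∑ z ∈ G.neighborFinset u, W (Sym2.mk u z) j j : ℝ) : ℂ) := by
        simp [hLjc, Matrix.map_apply, scalarLap]
      rw [hzero] at hentry
      have : (0 : ℂ) = ((∑ z ∈ G.neighborFinset u, W (Sym2.mk u z) j j : ℝ) : ℂ) := hentry
      exact hpos.ne' (by exact_mod_cast this.symm)
    have hSne : S.Nonempty := by
      obtain ⟨r, hr⟩ := hSjne ⟨0, hd⟩
      exact ⟨r, hS_eq ▸ Set.mem_iUnion.2 ⟨⟨0, hd⟩, hr⟩⟩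
    have hrange_bdd : BddBelow (Set.range fun j : Fin d => sInf (Sj j)) :=
      (Set.finite_range _).bddBelow
    haveI : Nonempty (Fin d) := ⟨⟨0, hd⟩⟩
    have hrange_ne : (Set.range fun j : Fin d => sInf (Sj j)).Nonempty :=
      Set.range_nonempty _
    apply le_antisymm
    · refine le_csInf hrange_ne ?_
      rintro x ⟨j, rfl⟩
      refine csInf_le_csInf hS_bdd (hSjne j) ?_
      intro r hr
      rw [hS_eq]
      exact Set.mem_iUnion.2 ⟨j, hr⟩
    · refine le_csInf hSne ?_
      intro r hr
      rw [hS_eq] at hr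
      obtain ⟨j, hj⟩ := Set.mem_iUnion.1 hr
      calc sInf (Set.range fun j : Fin d => sInf (Sj j)) ≤ sInf (Sj j) :=
            csInf_le hrange_bdd ⟨j, rfl⟩
        _ ≤ r := csInf_le (hSj_bdd j) hj
  · -- no edges
    have hlapzero : ∀ j, Ljc j = 0 := by
      intro j
      have : scalarLap G (fun e => W e j j) = 0 := by
        ext u v
        have hne : G.neighborFinset u = ∅ := by
          refine Finset.eq_empty_of_forall_notMem fun z hz => ?_
          rw [SimpleGraph.mem_neighborFinset] at hz
          exact hedge ⟨u, z, hz⟩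
        by_cases h : u = v
        · subst h; simp [scalarLap, hne]
        · have : ¬ G.Adj u v := fun hc => hedge ⟨u, v, hc⟩
          simp [scalarLap, h, this]
      simp [hLjc, this]
    have hSj_empty : ∀ j, Sj j = ∅ := by
      intro j
      rw [Set.eq_empty_iff_forall_notMem]
      rintro r ⟨hr0, hrspec⟩
      rw [hlapzero j] at hrspec
      exact not_mem_spectrum_zero_matrix (by exact_mod_cast hr0) hrspec
    have hS_empty : S = ∅ := by
      rw [hS_eq]
      simp [hSj_empty]
    rw [hS_empty, Real.sInf_empty]
    have : (fun j : Fin d => sInf (Sj j)) = fun _ => (0 : ℝ) := by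
      funext j; rw [hSj_empty j, Real.sInf_empty]
    rw [this]
    haveI : Nonempty (Fin d) := ⟨⟨0, hd⟩⟩
    rw [Set.range_const, csInf_singleton]
end
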